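/- arXiv:0709.3784 — 10 statements merged into one kernel-verified Lean document; each statement's English description precedes it below -/
import Mathlib

section
/- The set 𝕂 of generalised Puiseux series over ℂ is a subfield of the Hahn series field HahnSeries ℝ ℂ: it contains 0 and 1, and is closed under addition, negation, multiplication, and multiplicative inverses of nonzero elements. -/
/-- A Hahn series `f : HahnSeries ℝ ℂ` is a *generalised Puiseux series* (i.e. lies in `𝕂`)
if its support has finite intersection with `(-∞, M]` for every real `M`. -/
def IsGenPuiseux (f : HahnSeries ℝ ℂ) : Prop :=
  ∀ M : ℝ, (f.support ∩ Set.Iic M).Finite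

namespace GenPuiseuxAux

open HahnSeries Set Pointwise

/-- The set-level condition. -/
def PS (A : Set ℝ) : Prop := ∀ M : ℝ, (A ∩ Set.Iic M).Finite

lemma PS.mono {A B : Set ℝ} (h : PS A) (hBA : B ⊆ A) : PS B :=
  fun M => (h M).subset (Set.inter_subset_inter_left _ hBA)

lemma PS.of_finite {A : Set ℝ} (h : A.Finite) : PS A :=
  fun _ => h.subset Set.inter_subset_left

lemma PS.union {A B : Set ℝ} (hA : PS A) (hB : PS B) : PS (A ∪ B) := fun M => by
  rw [Set.union_inter_distrib_right]
  exact (hA M).union (hB M)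

lemma PS.exists_lb {A : Set ℝ} (h : PS A) : ∃ a0 : ℝ, ∀ a ∈ A, a0 ≤ a := by
  rcases A.eq_empty_or_nonempty with rfl | ⟨a, ha⟩
  · exact ⟨0, by simp⟩
  · obtain ⟨L, hL⟩ := (h a).bddBelow
    refine ⟨min L a, fun x hx => ?_⟩
    rcases le_or_gt x a with hxa | hxa
    · exact le_trans (min_le_left _ _) (hL ⟨hx, hxa⟩)
    · exact le_trans (min_le_right _ _) hxa.le

lemma PS.add {A B : Set ℝ} (hA : PS A) (hB : PS B) : PS (A + B) := by
  obtain ⟨a0, ha0⟩ := hA.exists_lb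
  obtain ⟨b0, hb0⟩ := hB.exists_lb
  intro M
  refine Set.Finite.subset ((hA (M - b0)).add (hB (M - a0))) ?_
  rintro x ⟨⟨a, ha, b, hb, rfl⟩, hM⟩
  exact Set.add_mem_add ⟨ha, by have := hb0 b hb; simp only [Set.mem_Iic] at hM ⊢; linarith⟩
    ⟨hb, by have := ha0 a ha; simp only [Set.mem_Iic] at hM ⊢; linarith⟩

lemma mul_mem {f g : HahnSeries ℝ ℂ} (hf : IsGenPuiseux f) (hg : IsGenPuiseux g) :
    IsGenPuiseux (f * g) :=
  PS.mono (PS.add hf hg) HahnSeries.support_mul_subset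

lemma pow_mem {f : HahnSeries ℝ ℂ} (hf : IsGenPuiseux f) (n : ℕ) : IsGenPuiseux (f ^ n) := by
  induction n with
  | zero => exact PS.of_finite ((Set.finite_singleton 0).subset (by
      rw [pow_zero, HahnSeries.support_one]))
  | succ n ih => rw [pow_succ]; exact mul_mem ih hf

lemma support_pow_subset {y : HahnSeries ℝ ℂ} (hy : y.support ⊆ Set.Ici y.order) (n : ℕ) :
    (y ^ n).support ⊆ Set.Ici ((n : ℝ) * y.order) := by
  induction n with
  | zero =>
    rw [pow_zero, HahnSeries.support_one]
    simp
  | succ n ih =>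
    rw [pow_succ]
    refine subset_trans HahnSeries.support_mul_subset ?_
    rintro x ⟨a, ha, b, hb, rfl⟩
    have h1 := ih ha
    have h2 := hy hb
    simp only [Set.mem_Ici] at h1 h2 ⊢
    push_cast
    linarith

lemma iUnion_pow {y : HahnSeries ℝ ℂ} (hy : 0 < y.orderTop) (hPS : IsGenPuiseux y) :
    PS (⋃ n : ℕ, (y ^ n).support) := by
  by_cases hy0 : y = 0
  · subst hy0
    refine PS.of_finite ((Set.finite_singleton 0).subset ?_)
    refine Set.iUnion_subset fun n => ?_
    rcases Nat.eq_zero_or_pos n with rfl | hn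
    · rw [pow_zero, HahnSeries.support_one]
    · rw [zero_pow hn.ne', HahnSeries.support_zero]; exact Set.empty_subset _
  · have horder : (0 : ℝ) < y.order := by
      have h : (y.order : WithTop ℝ) = y.orderTop := HahnSeries.order_eq_orderTop_of_ne_zero hy0
      have h2 : (0 : WithTop ℝ) < (y.order : WithTop ℝ) := by rw [h]; exact hy
      exact_mod_cast h2
    have hsupp : y.support ⊆ Set.Ici y.order := fun a ha =>
      HahnSeries.order_le_of_coeff_ne_zero ha
    intro M
    obtain ⟨N, hN⟩ := exists_nat_gt (M / y.order)
    have hNM : M < (N : ℝ) * y.order := by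
      rw [div_lt_iff₀ horder] at hN
      exact hN
    refine Set.Finite.subset (Set.Finite.biUnion (Set.finite_Iio N)
      (fun n _ => pow_mem hPS n M)) ?_
    rintro x ⟨hx, hxM⟩
    simp only [Set.mem_iUnion] at hx
    obtain ⟨n, hn⟩ := hx
    refine Set.mem_biUnion (show n ∈ Set.Iio N from ?_) ⟨hn, hxM⟩
    by_contra hcon
    have hNn : (N : ℝ) ≤ (n : ℝ) := by exact_mod_cast not_lt.mp hcon
    have := support_pow_subset hsupp n hn
    simp only [Set.mem_Ici] at this
    simp only [Set.mem_Iic] at hxM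
    nlinarith

lemma inv_mem {f : HahnSeries ℝ ℂ} (hf0 : f ≠ 0) (hf : IsGenPuiseux f) :
    IsGenPuiseux f⁻¹ := by
  set r : ℂ := f.leadingCoeff⁻¹ with hr
  have hru : r * f.leadingCoeff = 1 :=
    inv_mul_cancel₀ (HahnSeries.leadingCoeff_ne_zero.mpr hf0)
  set y : HahnSeries ℝ ℂ := 1 - HahnSeries.single (-f.order) r * f with hy
  have hyo : 0 < y.orderTop := HahnSeries.unit_aux f hru (-f.order) (by simp)
  have hmul : (1 - y) * (HahnSeries.SummableFamily.powers y).hsum = 1 :=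
    HahnSeries.SummableFamily.one_sub_self_mul_hsum_powers hyo
  have h1y : 1 - y = HahnSeries.single (-f.order) r * f := by
    rw [hy, sub_sub_cancel]
  have heq : f * (HahnSeries.single (-f.order) r *
      (HahnSeries.SummableFamily.powers y).hsum) = 1 := by
    rw [h1y] at hmul
    rw [← hmul]; ring
  have hinv : f⁻¹ = HahnSeries.single (-f.order) r *
      (HahnSeries.SummableFamily.powers y).hsum :=
    inv_eq_of_mul_eq_one_right heq
  rw [hinv]
  have hsingle : IsGenPuiseux (HahnSeries.single (-f.order) r : HahnSeries ℝ ℂ) :=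
    PS.of_finite ((Set.finite_singleton _).subset HahnSeries.support_single_subset)
  have hsingle' : IsGenPuiseux (HahnSeries.single (-f.order) r * f) := mul_mem hsingle hf
  have hyPS : IsGenPuiseux y := by
    have hsub : y.support ⊆ (1 : HahnSeries ℝ ℂ).support ∪
        (-(HahnSeries.single (-f.order) r * f)).support := by
      rw [hy, sub_eq_add_neg]; exact HahnSeries.support_add_subset _ _
    refine PS.mono (PS.union ?_ ?_) hsub
    · exact PS.of_finite (by rw [HahnSeries.support_one]; exact Set.finite_singleton 0)
    · show PS (HahnSeries.support _)
      rw [HahnSeries.support_neg]; exact hsingle'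
  have hhsum : IsGenPuiseux (HahnSeries.SummableFamily.powers y).hsum := by
    refine PS.mono (iUnion_pow hyo hyPS) ?_
    refine subset_trans HahnSeries.SummableFamily.support_hsum_subset ?_
    refine Set.iUnion_mono fun n => ?_
    rw [HahnSeries.SummableFamily.coe_powers hyo]
  exact mul_mem hsingle hhsum

end GenPuiseuxAux

/-- The set `𝕂` of generalised Puiseux series over `ℂ` is a subfield of the Hahn series
field `HahnSeries ℝ ℂ`: it contains `0` and `1` and is closed under addition, negation,
multiplication and inverses of nonzero elements. -/
theorem genPuiseux_subfield :
    ∃ S : Subfield (HahnSeries ℝ ℂ), (S : Set (HahnSeries ℝ ℂ)) = {f | IsGenPuiseux f} := by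
  refine ⟨{
    carrier := {f | IsGenPuiseux f}
    mul_mem' := fun hf hg => GenPuiseuxAux.mul_mem hf hg
    one_mem' := GenPuiseuxAux.PS.of_finite
      ((Set.finite_singleton 0).subset (by rw [HahnSeries.support_one]))
    add_mem' := fun hf hg => GenPuiseuxAux.PS.mono (GenPuiseuxAux.PS.union hf hg)
      (HahnSeries.support_add_subset _ _)
    zero_mem' := GenPuiseuxAux.PS.of_finite (by rw [HahnSeries.support_zero]; exact Set.finite_empty)
    neg_mem' := fun {f} hf => by
      show IsGenPuiseux (-f)
      unfold IsGenPuiseux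
      rw [HahnSeries.support_neg]
      exact hf
    inv_mem' := fun f hf => by
      by_cases h0 : f = 0
      · subst h0; rw [inv_zero]; exact hf
      · exact GenPuiseuxAux.inv_mem h0 hf
  }, rfl⟩
end

section
/- The field 𝕂 of generalised Puiseux series over ℂ is algebraically closed: every non-constant polynomial with coefficients in 𝕂 has a root in 𝕂. -/
namespace GenP

abbrev H := HahnSeries ℝ ℂ

theorem gp_of_subset {f g : H} (h : f.support ⊆ g.support) (hg : IsGenPuiseux g) :
    IsGenPuiseux f := fun M => (hg M).subset (Set.inter_subset_inter_left _ h)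

theorem gp_zero : IsGenPuiseux 0 := by
  intro M; simp [HahnSeries.support_zero]

theorem gp_single (a : ℝ) (c : ℂ) : IsGenPuiseux (HahnSeries.single a c) := by
  intro M
  exact (Set.finite_singleton a).subset
    (Set.inter_subset_left.trans HahnSeries.support_single_subset)

theorem gp_one : IsGenPuiseux 1 := by
  simpa using gp_single 0 1

theorem gp_C (c : ℂ) : IsGenPuiseux (HahnSeries.C c) := gp_single 0 c

theorem gp_add {f g : H} (hf : IsGenPuiseux f) (hg : IsGenPuiseux g) :
    IsGenPuiseux (f + g) := by
  intro M
  refine ((hf M).union (hg M)).subset ?_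
  rw [← Set.union_inter_distrib_right]
  exact Set.inter_subset_inter_left _ (HahnSeries.support_add_subset f g)

theorem gp_neg {f : H} (hf : IsGenPuiseux f) : IsGenPuiseux (-f) := by
  refine gp_of_subset ?_ hf
  intro x hx
  simp only [HahnSeries.mem_support, HahnSeries.coeff_neg] at *
  simpa using hx

theorem gp_sub {f g : H} (hf : IsGenPuiseux f) (hg : IsGenPuiseux g) :
    IsGenPuiseux (f - g) := by
  rw [sub_eq_add_neg]; exact gp_add hf (gp_neg hg)

theorem mem_support_ge {f : H} {x : ℝ} (hx : x ∈ f.support) : f.order ≤ x :=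
  HahnSeries.order_le_of_coeff_ne_zero hx

theorem gp_mul {f g : H} (hf : IsGenPuiseux f) (hg : IsGenPuiseux g) :
    IsGenPuiseux (f * g) := by
  intro M
  by_cases hf0 : f = 0
  · simp [hf0]
  by_cases hg0 : g = 0
  · simp [hg0]
  refine (Set.Finite.image2 (· + ·) (hf (M - g.order)) (hg (M - f.order))).subset ?_
  rintro x ⟨hx, hxM⟩
  obtain ⟨α, hα, β, hβ, rfl⟩ := Set.mem_add.mp (HahnSeries.support_mul_subset hx)
  have h1 : f.order ≤ α := mem_support_ge hα
  have h2 : g.order ≤ β := mem_support_ge hβ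
  have hxM' : α + β ≤ M := hxM
  exact ⟨α, ⟨hα, by simp only [Set.mem_Iic]; linarith⟩,
    β, ⟨hβ, by simp only [Set.mem_Iic]; linarith⟩, rfl⟩

theorem gp_pow {f : H} (hf : IsGenPuiseux f) : ∀ n : ℕ, IsGenPuiseux (f ^ n)
  | 0 => by simpa using gp_one
  | n + 1 => by rw [pow_succ]; exact gp_mul (gp_pow hf n) hf

theorem gp_sum {α : Type*} (s : Finset α) (f : α → H) (hf : ∀ a ∈ s, IsGenPuiseux (f a)) :
    IsGenPuiseux (∑ a ∈ s, f a) := by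
  classical
  induction s using Finset.induction with
  | empty => simpa using gp_zero
  | insert _ _ h ih =>
    rw [Finset.sum_insert h]
    exact gp_add (hf _ (Finset.mem_insert_self _ _))
      (ih fun a ha => hf a (Finset.mem_insert_of_mem ha))

theorem gp_natCast (n : ℕ) : IsGenPuiseux (n : H) := by
  have : (n : H) = HahnSeries.C (n : ℂ) := by
    simp [map_natCast]
  rw [this]; exact gp_C _

/-! ### the valuation lower-bound predicate -/

/-- `vge x r` : all coefficients of `x` below `r` vanish, i.e. `r ≤ orderTop x`. -/
def vge (x : H) (r : ℝ) : Prop := ∀ s < r, x.coeff s = 0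

theorem vge_of_le {x : H} {r r' : ℝ} (h : vge x r) (hle : r' ≤ r) : vge x r' :=
  fun s hs => h s (lt_of_lt_of_le hs hle)

theorem vge_zero (r : ℝ) : vge 0 r := fun s _ => rfl

theorem vge_add {x y : H} {r : ℝ} (hx : vge x r) (hy : vge y r) : vge (x + y) r :=
  fun s hs => by rw [HahnSeries.coeff_add, hx s hs, hy s hs, add_zero]

theorem vge_neg {x : H} {r : ℝ} (hx : vge x r) : vge (-x) r :=
  fun s hs => by rw [HahnSeries.coeff_neg, hx s hs, neg_zero]

theorem vge_sub {x y : H} {r : ℝ} (hx : vge x r) (hy : vge y r) : vge (x - y) r := by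
  rw [sub_eq_add_neg]; exact vge_add hx (vge_neg hy)

theorem vge_single (a : ℝ) (c : ℂ) : vge (HahnSeries.single a c) a := by
  intro s hs
  exact HahnSeries.coeff_single_of_ne (ne_of_lt hs)

theorem vge_mul {x y : H} {a b : ℝ} (hx : vge x a) (hy : vge y b) : vge (x * y) (a + b) := by
  intro s hs
  by_contra hne
  obtain ⟨α, hα, β, hβ, hsum⟩ := Set.mem_add.mp (HahnSeries.support_mul_subset
    (show s ∈ (x * y).support from hne))
  have h1 : ¬ α < a := fun h => hα (hx α h)
  have h2 : ¬ β < b := fun h => hβ (hy β h)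
  push_neg at h1 h2
  have h3 : α + β < a + b := by rw [show α + β = s from hsum]; exact hs
  linarith

theorem vge_sum {α : Type*} (s : Finset α) (f : α → H) {r : ℝ}
    (hf : ∀ a ∈ s, vge (f a) r) : vge (∑ a ∈ s, f a) r := by
  classical
  induction s using Finset.induction with
  | empty => simpa using vge_zero r
  | insert _ _ h ih =>
    rw [Finset.sum_insert h]
    exact vge_add (hf _ (Finset.mem_insert_self _ _))
      (ih fun a ha => hf a (Finset.mem_insert_of_mem ha))

theorem vge_pow {x : H} {a : ℝ} (hx : vge x a) : ∀ n : ℕ, vge (x ^ n) (n * a)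
  | 0 => by
      intro s hs
      simp only [Nat.cast_zero, zero_mul] at hs
      rw [pow_zero]
      exact HahnSeries.coeff_single_of_ne (ne_of_lt hs)
  | n + 1 => by
      have := vge_mul (vge_pow hx n) hx
      rw [pow_succ]
      refine vge_of_le this (le_of_eq ?_)
      push_cast; ring

theorem vge_C_mul {x : H} {r : ℝ} (c : ℂ) (hx : vge x r) : vge (HahnSeries.C c * x) r := by
  have := vge_mul (x := HahnSeries.C c) (a := 0) (fun s hs => HahnSeries.coeff_single_of_ne (ne_of_lt hs)) hx
  rwa [zero_add] at this

theorem eq_zero_of_forall_vge {x : H} (h : ∀ r : ℝ, vge x r) : x = 0 := by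
  ext s
  exact h (s + 1) s (by linarith)

theorem vge_order {x : H} (hx : x ≠ 0) : vge x x.order :=
  fun _ hs => HahnSeries.coeff_eq_zero_of_lt_order hs

theorem le_order_of_vge {x : H} {r : ℝ} (h : vge x r) (hx : x ≠ 0) : r ≤ x.order := by
  by_contra hlt
  push_neg at hlt
  exact (HahnSeries.coeff_order_eq_zero.not.2 hx) (h _ hlt)

theorem lt_order_of_vge_coeff {x : H} {r : ℝ} (h : vge x r) (h0 : x.coeff r = 0)
    (hx : x ≠ 0) : r < x.order := by
  rcases lt_or_eq_of_le (le_order_of_vge h hx) with h' | h'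
  · exact h'
  · exact absurd (h' ▸ h0) (HahnSeries.coeff_order_eq_zero.not.2 hx)

theorem vge_iff_support {x : H} {r : ℝ} : vge x r ↔ x.support ⊆ Set.Ici r := by
  constructor
  · intro h s hs
    by_contra hlt
    exact hs (h s (lt_of_not_ge hlt))
  · intro h s hs
    by_contra hne
    exact absurd (h hne) (not_le.mpr hs)

theorem coeff_sum {α : Type*} (s : Finset α) (f : α → H) (g : ℝ) :
    (∑ a ∈ s, f a).coeff g = ∑ a ∈ s, (f a).coeff g := by
  classical
  induction s using Finset.induction with
  | empty => simp
  | insert _ _ h ih => rw [Finset.sum_insert h, Finset.sum_insert h, HahnSeries.coeff_add, ih]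

/-! ### summation of sequences with growing valuation -/

theorem gp_hsum_seq (c : ℕ → H) (hGP : ∀ k, IsGenPuiseux (c k)) (a δ : ℝ) (hδ : 0 < δ)
    (hv : ∀ k, vge (c k) (a + k * δ)) :
    ∃ S : H, IsGenPuiseux S ∧ ∀ K : ℕ, vge (S - ∑ k ∈ Finset.range K, c k) (a + K * δ) := by
  have hsupp : ∀ k, (c k).support ⊆ Set.Ici (a + k * δ) := fun k => vge_iff_support.mp (hv k)
  set U : Set ℝ := ⋃ k, (c k).support with hU
  have hUfin : ∀ M : ℝ, (U ∩ Set.Iic M).Finite := by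
    intro M
    obtain ⟨N, hN⟩ := exists_nat_gt ((M - a) / δ)
    have hNM : M < a + N * δ := by
      have := (div_lt_iff₀ hδ).mp hN
      linarith
    refine (Set.Finite.biUnion (Set.finite_Iio N)
      (fun k _ => (hGP k M))).subset ?_
    rintro x ⟨hxU, hxM⟩
    obtain ⟨k, hk⟩ := Set.mem_iUnion.mp hxU
    have hkN : k < N := by
      by_contra hge
      push_neg at hge
      have h1 : a + N * δ ≤ a + k * δ := by
        have : (N : ℝ) ≤ k := Nat.cast_le.mpr hge
        nlinarith
      have := hsupp k hk
      simp only [Set.mem_Ici] at this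
      simp only [Set.mem_Iic] at hxM
      linarith
    exact Set.mem_biUnion hkN ⟨hk, hxM⟩
  have hUWF : U.IsWF := by
    rw [Set.isWF_iff_no_descending_seq]
    intro f hf hmem
    have hinj : Function.Injective f := hf.injective
    have : (U ∩ Set.Iic (f 0)).Infinite := by
      refine Set.infinite_of_injective_forall_mem (f := f) hinj ?_
      intro n
      exact ⟨hmem n, hf.antitone (Nat.zero_le n)⟩
    exact this (hUfin (f 0))
  set fam : HahnSeries.SummableFamily ℝ ℂ ℕ :=
    ⟨c, hUWF.isPWO, by
      intro g
      obtain ⟨N, hN⟩ := exists_nat_gt ((g - a) / δ)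
      refine (Set.finite_Iio N).subset ?_
      intro k hk
      simp only [Set.mem_setOf_eq] at hk
      by_contra hge
      simp only [Set.mem_Iio, not_lt] at hge
      refine hk (hv k g ?_)
      have h1 : (N:ℝ) ≤ k := Nat.cast_le.mpr hge
      have := (div_lt_iff₀ hδ).mp hN
      nlinarith⟩ with hfam
  refine ⟨fam.hsum, ?_, ?_⟩
  · intro M
    refine (hUfin M).subset (Set.inter_subset_inter_left _ ?_)
    exact HahnSeries.SummableFamily.support_hsum_subset
  · intro K s hs
    have hco : { k : ℕ | (fam k).coeff s ≠ 0 } ⊆ (Finset.range K : Finset ℕ) := by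
      intro k hk
      simp only [Set.mem_setOf_eq] at hk
      simp only [Finset.coe_range, Set.mem_Iio]
      by_contra hge
      push_neg at hge
      refine hk (hv k s ?_)
      have h1 : (K:ℝ) ≤ k := Nat.cast_le.mpr hge
      have : a + K * δ ≤ a + k * δ := by nlinarith
      linarith
    rw [HahnSeries.coeff_sub, HahnSeries.SummableFamily.coeff_hsum_eq_sum_of_subset hco,
      coeff_sum, sub_eq_zero]
    rfl

/-! ### inverses -/

theorem gp_hsum_powers {g : H} (hg : IsGenPuiseux g) (h0 : 0 < g.orderTop) :
    IsGenPuiseux (HahnSeries.SummableFamily.powers g).hsum := by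
  by_cases hg0 : g = 0
  · refine gp_of_subset (g := 1) ?_ gp_one
    refine HahnSeries.SummableFamily.support_hsum_subset.trans ?_
    rw [HahnSeries.support_one]
    intro x hx
    obtain ⟨n, hn⟩ := Set.mem_iUnion.mp hx
    rw [HahnSeries.SummableFamily.coe_powers h0] at hn
    rcases Nat.eq_zero_or_pos n with rfl | hpos
    · simpa using hn
    · rw [hg0, zero_pow hpos.ne'] at hn
      simpa using hn
  · have hord : 0 < g.order := by
      rw [← HahnSeries.order_eq_orderTop_of_ne_zero hg0] at h0
      exact_mod_cast h0
    intro M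
    obtain ⟨N, hN⟩ := exists_nat_gt (M / g.order)
    have key : ∀ n : ℕ, (g ^ n).support ⊆ Set.Ici ((n : ℝ) * g.order) := by
      intro n
      refine vge_iff_support.mp ?_
      have h1 : vge g g.order := vge_order hg0
      have := vge_pow h1 n
      exact this
    refine (Set.Finite.biUnion (Set.finite_Iio N)
      (fun n _ => gp_pow hg n M)).subset ?_
    rintro x ⟨hxU, hxM⟩
    have hxU' := HahnSeries.SummableFamily.support_hsum_subset hxU
    obtain ⟨n, hn⟩ := Set.mem_iUnion.mp hxU'
    rw [HahnSeries.SummableFamily.coe_powers h0] at hn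
    have hnN : n < N := by
      by_contra hge
      push_neg at hge
      have h1 : (N:ℝ) ≤ n := Nat.cast_le.mpr hge
      have h2 := key n hn
      simp only [Set.mem_Ici] at h2
      simp only [Set.mem_Iic] at hxM
      have := (div_lt_iff₀ hord).mp hN
      nlinarith
    exact Set.mem_biUnion hnN ⟨hn, hxM⟩

theorem gp_inv {f : H} (hf : IsGenPuiseux f) : IsGenPuiseux f⁻¹ := by
  by_cases hf0 : f = 0
  · rw [hf0, inv_zero]; exact gp_zero
  · have hlc : f.leadingCoeff ≠ 0 := HahnSeries.leadingCoeff_ne_zero.mpr hf0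
    have hr : f.leadingCoeff⁻¹ * f.leadingCoeff = 1 := inv_mul_cancel₀ hlc
    have h0 := HahnSeries.unit_aux f hr (-f.order) (neg_add_cancel _)
    set g : H := 1 - HahnSeries.single (-f.order) f.leadingCoeff⁻¹ * f with hgdef
    have hgGP : IsGenPuiseux g :=
      gp_sub gp_one (gp_mul (gp_single _ _) hf)
    have hsum := HahnSeries.SummableFamily.one_sub_self_mul_hsum_powers (x := g) h0
    have h1g : 1 - g = HahnSeries.single (-f.order) f.leadingCoeff⁻¹ * f := by
      rw [hgdef]; ring
    rw [h1g] at hsum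
    have : f * (HahnSeries.single (-f.order) f.leadingCoeff⁻¹ *
        (HahnSeries.SummableFamily.powers g).hsum) = 1 := by
      rw [← hsum]; ring
    rw [inv_eq_of_mul_eq_one_right this]
    exact gp_mul (gp_single _ _) (gp_hsum_powers hgGP h0)

/-! ### polynomial-level predicates -/

open Polynomial

/-- All coefficients are generalised Puiseux series. -/
def PGP (P : Polynomial H) : Prop := ∀ i, IsGenPuiseux (P.coeff i)

/-- All coefficients have valuation at least `δ`. -/
def PV (δ : ℝ) (P : Polynomial H) : Prop := ∀ i, vge (P.coeff i) δ

theorem pgp_zero : PGP 0 := fun _ => by simpa using gp_zero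

theorem pgp_add {P Q : Polynomial H} (hP : PGP P) (hQ : PGP Q) : PGP (P + Q) :=
  fun i => by rw [coeff_add]; exact gp_add (hP i) (hQ i)

theorem pgp_neg {P : Polynomial H} (hP : PGP P) : PGP (-P) :=
  fun i => by rw [coeff_neg]; exact gp_neg (hP i)

theorem pgp_sub {P Q : Polynomial H} (hP : PGP P) (hQ : PGP Q) : PGP (P - Q) := by
  have : P - Q = P + -Q := sub_eq_add_neg P Q
  rw [this]; exact pgp_add hP (pgp_neg hQ)

theorem pgp_mul {P Q : Polynomial H} (hP : PGP P) (hQ : PGP Q) : PGP (P * Q) := by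
  intro i
  rw [coeff_mul]
  exact gp_sum _ _ fun a _ => gp_mul (hP a.1) (hQ a.2)

theorem pgp_C {x : H} (hx : IsGenPuiseux x) : PGP (Polynomial.C x) := by
  intro i
  rcases eq_or_ne i 0 with rfl | hi
  · rwa [coeff_C_zero]
  · rw [coeff_C, if_neg hi]; exact gp_zero

theorem pgp_X_pow (k : ℕ) : PGP ((X : Polynomial H) ^ k) := by
  intro i
  rw [coeff_X_pow]
  split
  · exact gp_one
  · exact gp_zero

theorem pv_zero' (δ : ℝ) : PV δ 0 := fun _ => by simpa using vge_zero δ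

theorem pv_of_le {P : Polynomial H} {δ δ' : ℝ} (h : PV δ P) (hle : δ' ≤ δ) : PV δ' P :=
  fun i => vge_of_le (h i) hle

theorem pv_add {P Q : Polynomial H} {δ : ℝ} (hP : PV δ P) (hQ : PV δ Q) : PV δ (P + Q) :=
  fun i => by rw [coeff_add]; exact vge_add (hP i) (hQ i)

theorem pv_neg {P : Polynomial H} {δ : ℝ} (hP : PV δ P) : PV δ (-P) :=
  fun i => by rw [coeff_neg]; exact vge_neg (hP i)

theorem pv_sub {P Q : Polynomial H} {δ : ℝ} (hP : PV δ P) (hQ : PV δ Q) : PV δ (P - Q) := by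
  have : P - Q = P + -Q := sub_eq_add_neg P Q
  rw [this]; exact pv_add hP (pv_neg hQ)

theorem pv_mul {P Q : Polynomial H} {δ ε : ℝ} (hP : PV δ P) (hQ : PV ε Q) :
    PV (δ + ε) (P * Q) := by
  intro i
  rw [coeff_mul]
  exact vge_sum _ _ fun a _ => vge_mul (hP a.1) (hQ a.2)

theorem pv_C {x : H} {δ : ℝ} (hx : vge x δ) : PV δ (Polynomial.C x) := by
  intro i
  rcases eq_or_ne i 0 with rfl | hi
  · rwa [coeff_C_zero]
  · rw [coeff_C, if_neg hi]; exact vge_zero δ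

theorem pv_X_pow (k : ℕ) : PV 0 ((X : Polynomial H) ^ k) := by
  intro i
  rw [coeff_X_pow]
  split
  · exact vge_single 0 1
  · exact vge_zero 0

theorem pgp_eval {P : Polynomial H} {y : H} (hP : PGP P) (hy : IsGenPuiseux y) :
    IsGenPuiseux (P.eval y) := by
  rw [Polynomial.eval_eq_sum_range]
  exact gp_sum _ _ fun i _ => gp_mul (hP i) (gp_pow hy i)

/-! ### the constant embedding ℂ[X] → H[X] -/

noncomputable abbrev CH : ℂ →+* H := HahnSeries.C

noncomputable abbrev mapCH (f : Polynomial ℂ) : Polynomial H := Polynomial.map CH f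

theorem pgp_mapCH (f : Polynomial ℂ) : PGP (mapCH f) := by
  intro i; rw [coeff_map]; exact gp_C _

theorem pv_mapCH (f : Polynomial ℂ) : PV 0 (mapCH f) := by
  intro i; rw [coeff_map]; exact vge_single 0 _

theorem natDegree_mapCH (f : Polynomial ℂ) : (mapCH f).natDegree = f.natDegree :=
  natDegree_map_eq_of_injective HahnSeries.C_injective f

theorem degree_mapCH (f : Polynomial ℂ) : (mapCH f).degree = f.degree :=
  degree_map_eq_of_injective HahnSeries.C_injective f

/-! ### residue polynomial -/

/-- residue polynomial: take the coefficient at exponent `0` of each coefficient. -/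
noncomputable def resP (P : Polynomial H) : Polynomial ℂ :=
  ∑ i ∈ Finset.range (P.natDegree + 1), Polynomial.C ((P.coeff i).coeff 0) * Polynomial.X ^ i

theorem resP_coeff (P : Polynomial H) (j : ℕ) : (resP P).coeff j = (P.coeff j).coeff 0 := by
  rw [resP, finset_sum_coeff]
  simp only [coeff_C_mul, coeff_X_pow, mul_ite, mul_one, mul_zero]
  rw [Finset.sum_ite_eq (Finset.range (P.natDegree + 1)) j fun i => (P.coeff i).coeff 0]
  split
  · rfl
  · rename_i hj
    rw [Polynomial.coeff_eq_zero_of_natDegree_lt, HahnSeries.coeff_zero]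
    simpa using Nat.lt_of_succ_le (not_lt.mp (by simpa [Finset.mem_range] using hj))

theorem resP_mapCH (f : Polynomial ℂ) : resP (mapCH f) = f := by
  ext j
  rw [resP_coeff, coeff_map]
  exact HahnSeries.coeff_single_same 0 _

theorem natDegree_resP_le (P : Polynomial H) : (resP P).natDegree ≤ P.natDegree := by
  refine Polynomial.natDegree_le_iff_coeff_eq_zero.mpr fun m hm => ?_
  rw [resP_coeff, Polynomial.coeff_eq_zero_of_natDegree_lt hm, HahnSeries.coeff_zero]

/-! ### scaling -/

/-- substitute `c * X` for `X` (coefficientwise `c^i`-scaling). -/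
noncomputable def scaleP (c : H) (P : Polynomial H) : Polynomial H :=
  ∑ i ∈ Finset.range (P.natDegree + 1), Polynomial.C (c ^ i * P.coeff i) * Polynomial.X ^ i

theorem scaleP_coeff (c : H) (P : Polynomial H) (j : ℕ) :
    (scaleP c P).coeff j = c ^ j * P.coeff j := by
  rw [scaleP, finset_sum_coeff]
  simp only [coeff_C_mul, coeff_X_pow, mul_ite, mul_one, mul_zero]
  rw [Finset.sum_ite_eq (Finset.range (P.natDegree + 1)) j fun i => c ^ i * P.coeff i]
  split
  · rfl
  · rename_i hj
    rw [Polynomial.coeff_eq_zero_of_natDegree_lt, mul_zero]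
    simpa using Nat.lt_of_succ_le (not_lt.mp (by simpa [Finset.mem_range] using hj))

theorem scaleP_eval (c x : H) (P : Polynomial H) :
    (scaleP c P).eval x = P.eval (c * x) := by
  rw [scaleP, Polynomial.eval_finset_sum, Polynomial.eval_eq_sum_range]
  refine Finset.sum_congr rfl fun i _ => ?_
  rw [eval_mul, eval_C, eval_pow, eval_X, mul_pow]
  ring

/-! ### division with remainder by a monic constant-coefficient polynomial -/

theorem polydiv (v : Polynomial ℂ) (hv : v.Monic) :
    ∀ m : ℕ, ∀ W : Polynomial H, W.degree < (m : ℕ) →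
    ∃ Q R : Polynomial H, W = mapCH v * Q + R ∧ R.degree < (v.natDegree : WithBot ℕ) ∧
      (∀ δ : ℝ, PV δ W → PV δ Q ∧ PV δ R) ∧ (PGP W → PGP Q ∧ PGP R) := by
  intro m
  induction m with
  | zero =>
    intro W hW
    have hW0 : W = 0 := Polynomial.ext fun j =>
      (Polynomial.degree_lt_iff_coeff_zero W 0).mp (by exact_mod_cast hW) j (Nat.zero_le j)
    refine ⟨0, 0, by simp [hW0],
      by simp only [Polynomial.degree_zero]; exact WithBot.bot_lt_coe _, ?_, ?_⟩
    · intro δ _; exact ⟨pv_zero' δ, pv_zero' δ⟩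
    · intro _; exact ⟨pgp_zero, pgp_zero⟩
  | succ m ih =>
    intro W hW
    by_cases hlt : W.degree < (v.natDegree : WithBot ℕ)
    · refine ⟨0, W, by simp, hlt, ?_, ?_⟩
      · intro δ h; exact ⟨pv_zero' δ, h⟩
      · intro h; exact ⟨pgp_zero, h⟩
    · push_neg at hlt
      have hWne : W ≠ 0 := by
        intro h0
        rw [h0, Polynomial.degree_zero] at hlt
        exact absurd hlt (by simp)
      set a := v.natDegree with ha
      set mw := W.natDegree with hmw
      have hdegW : W.degree = (mw : WithBot ℕ) := Polynomial.degree_eq_natDegree hWne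
      have hamw : a ≤ mw := by
        rw [hdegW] at hlt
        exact_mod_cast hlt
      have hmwm : mw ≤ m := by
        rw [hdegW] at hW
        exact_mod_cast Nat.lt_succ_iff.mp (by exact_mod_cast hW)
      set T : Polynomial H := Polynomial.C (W.coeff mw) * (mapCH v * Polynomial.X ^ (mw - a))
        with hT
      set W' : Polynomial H := W - T with hW'
      have hTcoeff : ∀ j : ℕ, T.coeff j
          = W.coeff mw * (if mw - a ≤ j then (mapCH v).coeff (j - (mw - a)) else 0) := by
        intro j
        rw [hT, Polynomial.coeff_C_mul, Polynomial.coeff_mul_X_pow']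
      have hdegW' : W'.degree < (mw : WithBot ℕ) := by
        rw [Polynomial.degree_lt_iff_coeff_zero]
        intro j hj
        rw [hW', Polynomial.coeff_sub, hTcoeff j]
        rcases eq_or_lt_of_le hj with rfl | hj'
        · rw [if_pos (Nat.sub_le _ _), Nat.sub_sub_self hamw, Polynomial.coeff_map]
          have : v.coeff a = 1 := hv
          rw [this, map_one, mul_one, sub_self]
        · have h1 : W.coeff j = 0 := Polynomial.coeff_eq_zero_of_natDegree_lt hj'
          have h2 : (mapCH v).coeff (j - (mw - a)) = 0 := by
            refine Polynomial.coeff_eq_zero_of_natDegree_lt ?_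
            rw [natDegree_mapCH]
            omega
          rw [h1, if_pos (by omega), h2, mul_zero, sub_self]
      have hdegW'm : W'.degree < (m : WithBot ℕ) :=
        lt_of_lt_of_le hdegW' (by exact_mod_cast hmwm)
      obtain ⟨Q', R', hid, hdegR', hpv, hpgp⟩ := ih W' hdegW'm
      refine ⟨Q' + Polynomial.C (W.coeff mw) * Polynomial.X ^ (mw - a), R', ?_, hdegR', ?_, ?_⟩
      · have h1 : W = W' + T := by rw [hW']; ring
        have h2 : mapCH v * (Q' + Polynomial.C (W.coeff mw) * Polynomial.X ^ (mw - a)) + R'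
            = (mapCH v * Q' + R') + T := by rw [hT]; ring
        rw [h2, ← hid, ← h1]
      · intro δ hWpv
        have hTpv : PV δ T := by
          have h1 : PV δ (Polynomial.C (W.coeff mw)) := pv_C (hWpv mw)
          have h2 : PV (0 + 0 : ℝ) (mapCH v * Polynomial.X ^ (mw - a)) :=
            pv_mul (pv_mapCH v) (pv_X_pow _)
          have h3 := pv_mul h1 (by rw [add_zero] at h2; exact h2)
          rw [add_zero] at h3
          exact h3
        have hW'pv : PV δ W' := pv_sub hWpv hTpv
        obtain ⟨hQ', hR'⟩ := hpv δ hW'pv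
        refine ⟨pv_add hQ' ?_, hR'⟩
        have h2 := pv_mul (pv_C (hWpv mw)) (pv_X_pow (mw - a) )
        rw [add_zero] at h2
        exact h2
      · intro hWgp
        have hTgp : PGP T :=
          pgp_mul (pgp_C (hWgp mw)) (pgp_mul (pgp_mapCH v) (pgp_X_pow _))
        obtain ⟨hQ', hR'⟩ := hpgp (pgp_sub hWgp hTgp)
        exact ⟨pgp_add hQ' (pgp_mul (pgp_C (hWgp mw)) (pgp_X_pow _)), hR'⟩

/-! ### solving the linearised equation -/

theorem solve_exists (f₀ g₀ : Polynomial ℂ) (hf : f₀.Monic) (hf1 : 1 ≤ f₀.natDegree)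
    (hcop : IsCoprime f₀ g₀) (n : ℕ) (hdeg : f₀.natDegree + g₀.natDegree ≤ n)
    (e : Polynomial H) (he : e.degree ≤ (n : WithBot ℕ)) :
    ∃ dF dG : Polynomial H, mapCH f₀ * dG + mapCH g₀ * dF = e ∧
      dF.degree < (f₀.natDegree : WithBot ℕ) ∧ dG.degree ≤ ((n - f₀.natDegree : ℕ) : WithBot ℕ) ∧
      (∀ δ : ℝ, PV δ e → PV δ dF ∧ PV δ dG) ∧ (PGP e → PGP dF ∧ PGP dG) := by
  obtain ⟨A, B, hAB⟩ := hcop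
  set W : Polynomial H := mapCH B * e with hWdef
  obtain ⟨Q, R, hid, hdegR, hpvQR, hpgpQR⟩ := polydiv f₀ hf (W.natDegree + 1) W
    (lt_of_le_of_lt Polynomial.degree_le_natDegree (by exact_mod_cast Nat.lt_succ_self W.natDegree))
  set dG : Polynomial H := mapCH A * e + Q * mapCH g₀ with hdG
  have hIdent : mapCH f₀ * dG + mapCH g₀ * R = e := by
    have h1 : mapCH f₀ * dG + mapCH g₀ * R
        = mapCH (A * f₀ + B * g₀) * e + mapCH g₀ * ((mapCH f₀ * Q + R) - W) := by
      simp only [hdG, hWdef, Polynomial.map_add, Polynomial.map_mul]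
      ring
    rw [h1, hAB, ← hid]
    have hWW : W - W = 0 := sub_self W
    rw [hWW, mul_zero, add_zero]
    simp
  refine ⟨R, dG, hIdent, hdegR, ?_, ?_, ?_⟩
  · -- degree bound for dG
    by_cases hdG0 : dG = 0
    · rw [hdG0, Polynomial.degree_zero]; exact bot_le
    · have hf0ne : f₀ ≠ 0 := hf.ne_zero
      have hdegf : (mapCH f₀).degree = (f₀.natDegree : WithBot ℕ) := by
        rw [degree_mapCH, Polynomial.degree_eq_natDegree hf0ne]
      have hlhs : (mapCH f₀ * dG).degree
          = (f₀.natDegree : WithBot ℕ) + (dG.natDegree : WithBot ℕ) := by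
        rw [Polynomial.degree_mul, hdegf, Polynomial.degree_eq_natDegree hdG0]
      have hrhs : (e - mapCH g₀ * R).degree ≤ (n : WithBot ℕ) := by
        refine le_trans (Polynomial.degree_sub_le _ _) (max_le he ?_)
        refine le_trans (Polynomial.degree_mul_le _ _) ?_
        by_cases hR0 : R = 0
        · rw [hR0, Polynomial.degree_zero, WithBot.add_bot]; exact bot_le
        · have h1 : (mapCH g₀).degree ≤ (g₀.natDegree : WithBot ℕ) := by
            rw [degree_mapCH]; exact Polynomial.degree_le_natDegree
          have h2 : R.degree = (R.natDegree : WithBot ℕ) := Polynomial.degree_eq_natDegree hR0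
          have h3 : R.natDegree < f₀.natDegree := by
            rw [h2] at hdegR; exact_mod_cast hdegR
          calc (mapCH g₀).degree + R.degree
              ≤ (g₀.natDegree : WithBot ℕ) + (R.natDegree : WithBot ℕ) := by
                rw [h2]; exact add_le_add h1 le_rfl
            _ = ((g₀.natDegree + R.natDegree : ℕ) : WithBot ℕ) := by push_cast; rfl
            _ ≤ (n : WithBot ℕ) := by
                have : g₀.natDegree + R.natDegree ≤ n := by omega
                exact_mod_cast this
      have hfG : mapCH f₀ * dG = e - mapCH g₀ * R := by rw [← hIdent]; ring
      rw [hfG] at hlhs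
      have h4 : ((f₀.natDegree + dG.natDegree : ℕ) : WithBot ℕ) ≤ (n : WithBot ℕ) := by
        have hc : ((f₀.natDegree + dG.natDegree : ℕ) : WithBot ℕ)
            = (f₀.natDegree : WithBot ℕ) + (dG.natDegree : WithBot ℕ) := by push_cast; rfl
        rw [hc, ← hlhs]
        exact hrhs
      have h5 : f₀.natDegree + dG.natDegree ≤ n := by exact_mod_cast h4
      have h6 : dG.natDegree ≤ n - f₀.natDegree := by omega
      refine le_trans Polynomial.degree_le_natDegree ?_
      exact_mod_cast h6
  · intro δ hpe
    have hWpv : PV δ W := by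
      have := pv_mul (pv_mapCH B) hpe
      rwa [zero_add] at this
    obtain ⟨hQpv, hRpv⟩ := hpvQR δ hWpv
    refine ⟨hRpv, pv_add ?_ ?_⟩
    · have := pv_mul (pv_mapCH A) hpe
      rwa [zero_add] at this
    · have := pv_mul hQpv (pv_mapCH g₀)
      rwa [add_zero] at this
  · intro hge
    have hWgp : PGP W := pgp_mul (pgp_mapCH B) hge
    obtain ⟨hQgp, hRgp⟩ := hpgpQR hWgp
    exact ⟨hRgp, pgp_add (pgp_mul (pgp_mapCH A) hge) (pgp_mul hQgp (pgp_mapCH g₀))⟩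

/-! ### Hensel lifting -/

theorem deg_le_of_lt' {P : Polynomial H} {a : ℕ} (h1 : 1 ≤ a)
    (h : P.degree < (a : WithBot ℕ)) : P.degree ≤ ((a - 1 : ℕ) : WithBot ℕ) := by
  by_cases hP : P = 0
  · rw [hP, Polynomial.degree_zero]; exact bot_le
  · rw [Polynomial.degree_eq_natDegree hP] at h ⊢
    have : P.natDegree < a := by exact_mod_cast h
    exact_mod_cast Nat.le_sub_one_of_lt this

theorem deg_mul_le' {P Q : Polynomial H} {a b : ℕ} (hP : P.degree ≤ (a : WithBot ℕ))
    (hQ : Q.degree ≤ (b : WithBot ℕ)) : (P * Q).degree ≤ ((a + b : ℕ) : WithBot ℕ) := by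
  refine le_trans (Polynomial.degree_mul_le _ _) ?_
  have := add_le_add hP hQ
  refine le_trans this (le_of_eq ?_)
  push_cast; rfl

/-- invariant for the Hensel iteration. -/
def HInv (r : Polynomial H) (f₀ g₀ : Polynomial ℂ) (n : ℕ) (δ₀ : ℝ) (k : ℕ)
    (F G : Polynomial H) : Prop :=
  F.Monic ∧ F.natDegree = f₀.natDegree ∧ PGP F ∧ PGP G ∧ PV 0 F ∧ PV 0 G ∧
  (F - mapCH f₀).degree < (f₀.natDegree : WithBot ℕ) ∧ PV δ₀ (F - mapCH f₀) ∧
  G.degree ≤ ((n - f₀.natDegree : ℕ) : WithBot ℕ) ∧ PV δ₀ (G - mapCH g₀) ∧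
  PV (δ₀ + k * δ₀) (r - F * G) ∧ (r - F * G).degree ≤ (n : WithBot ℕ)

theorem hensel_step (r : Polynomial H) (f₀ g₀ : Polynomial ℂ) (n : ℕ) (δ₀ : ℝ)
    (hδ₀ : 0 < δ₀) (hrGP : PGP r)
    (hf : f₀.Monic) (hf1 : 1 ≤ f₀.natDegree) (hcop : IsCoprime f₀ g₀)
    (hdegs : f₀.natDegree + g₀.natDegree ≤ n)
    (k : ℕ) (F G : Polynomial H) (hInv : HInv r f₀ g₀ n δ₀ k F G) :
    ∃ F' G' : Polynomial H, HInv r f₀ g₀ n δ₀ (k + 1) F' G' ∧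
      PV (δ₀ + k * δ₀) (F' - F) ∧ PV (δ₀ + k * δ₀) (G' - G) ∧
      (F' - F).degree < (f₀.natDegree : WithBot ℕ) ∧
      (G' - G).degree ≤ ((n - f₀.natDegree : ℕ) : WithBot ℕ) := by
  obtain ⟨hFm, hFd, hFgp, hGgp, hFpv, hGpv, hFF₀d, hFF₀pv, hGd, hGG₀pv, hEpv, hEd⟩ := hInv
  set a := f₀.natDegree with ha
  set E : Polynomial H := r - F * G with hE
  have hEgp : PGP E := pgp_sub hrGP (pgp_mul hFgp hGgp)
  obtain ⟨dF, dG, hsolve, hdFd, hdGd, hpv, hpgp⟩ :=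
    solve_exists f₀ g₀ hf hf1 hcop n hdegs E hEd
  obtain ⟨hdFpv, hdGpv⟩ := hpv (δ₀ + k * δ₀) hEpv
  obtain ⟨hdFgp, hdGgp⟩ := hpgp hEgp
  have hδk : (0:ℝ) ≤ δ₀ + k * δ₀ := by positivity
  refine ⟨F + dF, G + dG, ?_, ?_, ?_, ?_, ?_⟩
  · -- new invariant
    have hdFdF : dF.degree < F.degree := by
      rw [Polynomial.degree_eq_natDegree hFm.ne_zero, hFd]
      exact hdFd
    have hF'm : (F + dF).Monic := hFm.add_of_left hdFdF
    have hF'd : (F + dF).natDegree = a := by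
      rw [Polynomial.natDegree_eq_of_degree_eq (Polynomial.degree_add_eq_left_of_degree_lt hdFdF)]; exact hFd
    -- new error identity
    have hErr : r - (F + dF) * (G + dG)
        = -((F - mapCH f₀) * dG + (G - mapCH g₀) * dF + dF * dG) := by
      have h0 : mapCH f₀ * dG + mapCH g₀ * dF = r - F * G := hsolve
      have h1 : r - (F + dF) * (G + dG) = (r - F * G) - (mapCH f₀ * dG + mapCH g₀ * dF)
          - ((F - mapCH f₀) * dG + (G - mapCH g₀) * dF + dF * dG) := by ring
      rw [h1, h0]
      ring
    refine ⟨hF'm, hF'd, pgp_add hFgp hdFgp, pgp_add hGgp hdGgp,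
      pv_add hFpv (pv_of_le hdFpv hδk),
      pv_add hGpv (pv_of_le hdGpv hδk), ?_, ?_, ?_, ?_, ?_, ?_⟩
    · have : F + dF - mapCH f₀ = (F - mapCH f₀) + dF := by ring
      rw [this]
      exact lt_of_le_of_lt (Polynomial.degree_add_le _ _) (max_lt hFF₀d hdFd)
    · have : F + dF - mapCH f₀ = (F - mapCH f₀) + dF := by ring
      rw [this]
      exact pv_add hFF₀pv (pv_of_le hdFpv (by nlinarith))
    · exact le_trans (Polynomial.degree_add_le _ _) (max_le hGd hdGd)
    · have : G + dG - mapCH g₀ = (G - mapCH g₀) + dG := by ring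
      rw [this]
      exact pv_add hGG₀pv (pv_of_le hdGpv (by nlinarith))
    · -- PV of new error
      rw [hErr]
      push_cast
      refine pv_neg (pv_add (pv_add ?_ ?_) ?_)
      · have h1 := pv_mul hFF₀pv hdGpv
        refine pv_of_le h1 (le_of_eq (by ring))
      · have h1 := pv_mul hGG₀pv hdFpv
        refine pv_of_le h1 (le_of_eq (by ring))
      · have h1 := pv_mul hdFpv hdGpv
        refine pv_of_le h1 (by nlinarith)
    · -- degree of new error
      rw [hErr, Polynomial.degree_neg]
      have h1 : ((F - mapCH f₀) * dG).degree ≤ (n : WithBot ℕ) := by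
        refine le_trans (deg_mul_le' (deg_le_of_lt' hf1 hFF₀d) hdGd) ?_
        exact_mod_cast Nat.le_of_lt_succ (by omega)
      have h2 : ((G - mapCH g₀) * dF).degree ≤ (n : WithBot ℕ) := by
        have hGG₀d : (G - mapCH g₀).degree ≤ ((n - a : ℕ) : WithBot ℕ) := by
          refine le_trans (Polynomial.degree_sub_le _ _) (max_le hGd ?_)
          rw [degree_mapCH]
          refine le_trans Polynomial.degree_le_natDegree ?_
          exact_mod_cast (by omega : g₀.natDegree ≤ n - a)
        refine le_trans (deg_mul_le' hGG₀d (deg_le_of_lt' hf1 hdFd)) ?_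
        exact_mod_cast (by omega : n - a + (a - 1) ≤ n)
      have h3 : (dF * dG).degree ≤ (n : WithBot ℕ) := by
        refine le_trans (deg_mul_le' (deg_le_of_lt' hf1 hdFd) hdGd) ?_
        exact_mod_cast (by omega : a - 1 + (n - a) ≤ n)
      exact le_trans (Polynomial.degree_add_le _ _)
        (max_le (le_trans (Polynomial.degree_add_le _ _) (max_le h1 h2)) h3)
  · have : F + dF - F = dF := by ring
    rw [this]; exact hdFpv
  · have : G + dG - G = dG := by ring
    rw [this]; exact hdGpv
  · have : F + dF - F = dF := by ring
    rw [this]; exact hdFd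
  · have : G + dG - G = dG := by ring
    rw [this]; exact hdGd

theorem seq_build {α : Type*} (P : ℕ → α → Prop) (Q : ℕ → α → α → Prop) (x0 : α) (h0 : P 0 x0)
    (hstep : ∀ k x, P k x → ∃ y, P (k + 1) y ∧ Q k x y) :
    ∃ u : ℕ → α, u 0 = x0 ∧ (∀ k, P k (u k)) ∧ ∀ k, Q k (u k) (u (k + 1)) := by
  choose f hf1 hf2 using hstep
  let u : ∀ k : ℕ, {x : α // P k x} := fun k =>
    Nat.rec ⟨x0, h0⟩ (fun k p => ⟨f k p.1 p.2, hf1 k p.1 p.2⟩) k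
  exact ⟨fun k => (u k).1, rfl, fun k => (u k).2, fun k => hf2 k (u k).1 (u k).2⟩

theorem csum_coeff (m : ℕ) (S : ℕ → H) (j : ℕ) :
    (∑ i ∈ Finset.range m, Polynomial.C (S i) * Polynomial.X ^ i).coeff j
      = if j < m then S j else 0 := by
  rw [finset_sum_coeff]
  simp only [Polynomial.coeff_C_mul, Polynomial.coeff_X_pow, mul_ite, mul_one, mul_zero]
  rw [Finset.sum_ite_eq (Finset.range m) j fun i => S i]
  simp [Finset.mem_range]

theorem csum_degree_lt (m : ℕ) (S : ℕ → H) :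
    (∑ i ∈ Finset.range m, Polynomial.C (S i) * Polynomial.X ^ i).degree < (m : WithBot ℕ) := by
  rw [Polynomial.degree_lt_iff_coeff_zero]
  intro j hj
  rw [csum_coeff, if_neg (by exact_mod_cast not_lt.mpr (by exact_mod_cast hj))]

theorem pgp_finsum {s : Finset ℕ} {f : ℕ → Polynomial H} (hf : ∀ i ∈ s, PGP (f i)) :
    PGP (∑ i ∈ s, f i) := by
  classical
  induction s using Finset.induction with
  | empty => simpa using pgp_zero
  | insert _ _ h ih =>
    rw [Finset.sum_insert h]
    exact pgp_add (hf _ (Finset.mem_insert_self _ _))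
      (ih fun i hi => hf i (Finset.mem_insert_of_mem hi))

theorem hensel (r : Polynomial H) (n : ℕ) (hn : r.natDegree = n) (hrGP : PGP r) (hrPV : PV 0 r)
    (f₀ g₀ : Polynomial ℂ) (hf : f₀.Monic) (hf1 : 1 ≤ f₀.natDegree)
    (hcop : IsCoprime f₀ g₀) (hdegs : f₀.natDegree + g₀.natDegree ≤ n)
    (hres : resP r = f₀ * g₀) :
    ∃ F G : Polynomial H, r = F * G ∧ F.Monic ∧ F.natDegree = f₀.natDegree ∧ PGP F := by
  classical
  set a := f₀.natDegree with ha
  set F₀ : Polynomial H := mapCH f₀ with hF₀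
  set G₀ : Polynomial H := mapCH g₀ with hG₀
  have hF₀m : F₀.Monic := hf.map CH
  have hF₀deg : F₀.degree = (a : WithBot ℕ) := by
    rw [hF₀, degree_mapCH, Polynomial.degree_eq_natDegree hf.ne_zero]
  have hF₀nat : F₀.natDegree = a := by rw [hF₀, natDegree_mapCH]
  have hG₀deg : G₀.degree ≤ ((n - a : ℕ) : WithBot ℕ) := by
    rw [hG₀, degree_mapCH]
    refine le_trans Polynomial.degree_le_natDegree ?_
    exact_mod_cast (by omega : g₀.natDegree ≤ n - a)
  set E₀ : Polynomial H := r - F₀ * G₀ with hE₀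
  have hF₀G₀ : F₀ * G₀ = mapCH (f₀ * g₀) := by
    rw [hF₀, hG₀]; exact (Polynomial.map_mul _).symm
  have hE₀pv0 : PV 0 E₀ := by
    refine pv_sub hrPV ?_
    have := pv_mul (pv_mapCH f₀) (pv_mapCH g₀)
    rwa [add_zero] at this
  have hE₀res : ∀ i, (E₀.coeff i).coeff 0 = 0 := by
    intro i
    have h2 := resP_coeff r i
    rw [hres] at h2
    rw [hE₀, Polynomial.coeff_sub, HahnSeries.coeff_sub, hF₀G₀, Polynomial.coeff_map,
      HahnSeries.C_apply, HahnSeries.coeff_single_same, ← h2, sub_self]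
  have hE₀deg : E₀.degree ≤ (n : WithBot ℕ) := by
    rw [hE₀]
    refine le_trans (Polynomial.degree_sub_le _ _) (max_le ?_ ?_)
    · rw [← hn]; exact Polynomial.degree_le_natDegree
    · rw [hF₀G₀, degree_mapCH]
      refine le_trans Polynomial.degree_le_natDegree ?_
      exact_mod_cast le_trans (Polynomial.natDegree_mul_le) hdegs
  by_cases hE₀0 : E₀ = 0
  · exact ⟨F₀, G₀, by rw [← sub_eq_zero]; exact hE₀0, hF₀m, hF₀nat, pgp_mapCH f₀⟩
  · -- the gain δ₀
    have hsupp : E₀.support.Nonempty := Polynomial.support_nonempty.mpr hE₀0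
    set δ₀ : ℝ := (E₀.support.image fun i => (E₀.coeff i).order).min' (hsupp.image _) with hδ₀
    have hδ₀pos : 0 < δ₀ := by
      have hmem := (E₀.support.image fun i => (E₀.coeff i).order).min'_mem (hsupp.image _)
      rw [← hδ₀] at hmem
      obtain ⟨i, hi, hio⟩ := Finset.mem_image.mp hmem
      have hine : E₀.coeff i ≠ 0 := Polynomial.mem_support_iff.mp hi
      rw [← hio]
      exact lt_order_of_vge_coeff (hE₀pv0 i) (hE₀res i) hine
    have hE₀pv : PV δ₀ E₀ := by
      intro i
      by_cases hi : E₀.coeff i = 0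
      · rw [hi]; exact vge_zero δ₀
      · refine vge_of_le (vge_order hi) ?_
        refine Finset.min'_le _ _ ?_
        exact Finset.mem_image.mpr ⟨i, Polynomial.mem_support_iff.mpr hi, rfl⟩
    -- initial invariant
    have hInv0 : HInv r f₀ g₀ n δ₀ 0 F₀ G₀ := by
      refine ⟨hF₀m, hF₀nat, pgp_mapCH f₀, pgp_mapCH g₀, pv_mapCH f₀, pv_mapCH g₀, ?_, ?_, hG₀deg, ?_, ?_, hE₀deg⟩
      · have h1 : F₀ - mapCH f₀ = 0 := by rw [hF₀]; ring
        rw [h1, Polynomial.degree_zero]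
        exact lt_of_lt_of_le (WithBot.bot_lt_coe 0) (by exact_mod_cast Nat.zero_le a)
      · have h1 : F₀ - mapCH f₀ = 0 := by rw [hF₀]; ring
        rw [h1]; exact pv_zero' δ₀
      · have h1 : G₀ - mapCH g₀ = 0 := by rw [hG₀]; ring
        rw [h1]; exact pv_zero' δ₀
      · have : δ₀ + (0:ℕ) * δ₀ = δ₀ := by push_cast; ring
        rw [this]
        exact hE₀pv
    -- build the sequence
    have hstepall : ∀ (k : ℕ) (FG : Polynomial H × Polynomial H),
        HInv r f₀ g₀ n δ₀ k (Prod.fst FG) (Prod.snd FG) →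
        ∃ FG' : Polynomial H × Polynomial H,
          HInv r f₀ g₀ n δ₀ (k+1) (Prod.fst FG') (Prod.snd FG') ∧
          (PV (δ₀ + k * δ₀) (FG'.1 - FG.1) ∧ PV (δ₀ + k * δ₀) (FG'.2 - FG.2) ∧
          (FG'.1 - FG.1).degree < (a : WithBot ℕ) ∧
          (FG'.2 - FG.2).degree ≤ ((n - a : ℕ) : WithBot ℕ)) := by
      rintro k ⟨F, G⟩ hP
      obtain ⟨F', G', hInv', h1, h2, h3, h4⟩ :=
        hensel_step r f₀ g₀ n δ₀ hδ₀pos hrGP hf hf1 hcop hdegs k F G hP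
      exact ⟨(F', G'), hInv', h1, h2, h3, h4⟩
    obtain ⟨u, hu0, huP, huQ⟩ := seq_build
      (P := fun k FG => HInv r f₀ g₀ n δ₀ k (Prod.fst FG) (Prod.snd FG))
      (Q := fun k FG FG' => PV (δ₀ + k * δ₀) (FG'.1 - FG.1) ∧ PV (δ₀ + k * δ₀) (FG'.2 - FG.2) ∧
        (FG'.1 - FG.1).degree < (a : WithBot ℕ) ∧ (FG'.2 - FG.2).degree ≤ ((n - a : ℕ) : WithBot ℕ))
      (x0 := (F₀, G₀)) hInv0 hstepall
    set Fk : ℕ → Polynomial H := fun k => (u k).1 with hFk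
    set Gk : ℕ → Polynomial H := fun k => (u k).2 with hGk
    -- coefficientwise limits
    have hex : ∀ i : ℕ, ∃ S : H, IsGenPuiseux S ∧
        ∀ K : ℕ, vge (S - ∑ k ∈ Finset.range K, ((Fk (k+1)).coeff i - (Fk k).coeff i)) (δ₀ + K * δ₀) := by
      intro i
      refine gp_hsum_seq _ ?_ δ₀ δ₀ hδ₀pos ?_
      · intro k
        exact gp_sub ((huP (k+1)).2.2.1 i) ((huP k).2.2.1 i)
      · intro k
        have := (huQ k).1 i
        rwa [Polynomial.coeff_sub] at this
    choose S hSgp hStail using hex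
    have hexG : ∀ i : ℕ, ∃ T : H, IsGenPuiseux T ∧
        ∀ K : ℕ, vge (T - ∑ k ∈ Finset.range K, ((Gk (k+1)).coeff i - (Gk k).coeff i)) (δ₀ + K * δ₀) := by
      intro i
      refine gp_hsum_seq _ ?_ δ₀ δ₀ hδ₀pos ?_
      · intro k
        exact gp_sub ((huP (k+1)).2.2.2.1 i) ((huP k).2.2.2.1 i)
      · intro k
        have := (huQ k).2.1 i
        rwa [Polynomial.coeff_sub] at this
    choose T hTgp hTtail using hexG
    set F' : Polynomial H := F₀ + ∑ i ∈ Finset.range a, Polynomial.C (S i) * Polynomial.X ^ i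
      with hF'
    set G' : Polynomial H := G₀ + ∑ i ∈ Finset.range (n - a + 1), Polynomial.C (T i) * Polynomial.X ^ i
      with hG'
    -- telescoping
    have htelF : ∀ (i K : ℕ), ∑ k ∈ Finset.range K, ((Fk (k+1)).coeff i - (Fk k).coeff i)
        = (Fk K).coeff i - F₀.coeff i := by
      intro i K
      rw [Finset.sum_range_sub (f := fun k => (Fk k).coeff i)]
      simp only [hFk, hu0]
    have htelG : ∀ (i K : ℕ), ∑ k ∈ Finset.range K, ((Gk (k+1)).coeff i - (Gk k).coeff i)
        = (Gk K).coeff i - G₀.coeff i := by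
      intro i K
      rw [Finset.sum_range_sub (f := fun k => (Gk k).coeff i)]
      simp only [hGk, hu0]
    -- tail bounds for the limits
    have hRF : ∀ K : ℕ, PV (δ₀ + K * δ₀) (F' - Fk K) := by
      intro K i
      rw [Polynomial.coeff_sub, hF', Polynomial.coeff_add, csum_coeff]
      by_cases hia : i < a
      · rw [if_pos hia]
        have h1 := hStail i K
        rw [htelF i K] at h1
        have : F₀.coeff i + S i - (Fk K).coeff i
            = S i - ((Fk K).coeff i - F₀.coeff i) := by ring
        rw [this]
        exact h1
      · rw [if_neg hia]
        have hdeg : (Fk K - F₀).degree < (a : WithBot ℕ) := (huP K).2.2.2.2.2.2.1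
        have h0 : (Fk K - F₀).coeff i = 0 := by
          refine Polynomial.coeff_eq_zero_of_degree_lt (lt_of_lt_of_le hdeg ?_)
          exact_mod_cast not_lt.mp hia
        rw [Polynomial.coeff_sub] at h0
        have : F₀.coeff i + 0 - (Fk K).coeff i = -((Fk K).coeff i - F₀.coeff i) := by ring
        rw [this, h0, neg_zero]
        exact vge_zero _
    have hRG : ∀ K : ℕ, PV (δ₀ + K * δ₀) (G' - Gk K) := by
      intro K i
      rw [Polynomial.coeff_sub, hG', Polynomial.coeff_add, csum_coeff]
      by_cases hia : i < n - a + 1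
      · rw [if_pos hia]
        have h1 := hTtail i K
        rw [htelG i K] at h1
        have : G₀.coeff i + T i - (Gk K).coeff i
            = T i - ((Gk K).coeff i - G₀.coeff i) := by ring
        rw [this]
        exact h1
      · rw [if_neg hia]
        have h0 : (Gk K - G₀).coeff i = 0 := by
          refine Polynomial.coeff_eq_zero_of_degree_lt ?_
          refine lt_of_le_of_lt (Polynomial.degree_sub_le _ _)
            (lt_of_le_of_lt (max_le (huP K).2.2.2.2.2.2.2.2.1 hG₀deg) ?_)
          exact_mod_cast (by omega : n - a < i)
        rw [Polynomial.coeff_sub] at h0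
        have : G₀.coeff i + 0 - (Gk K).coeff i = -((Gk K).coeff i - G₀.coeff i) := by ring
        rw [this, h0, neg_zero]
        exact vge_zero _
    -- final identity
    have hiden : ∀ K : ℕ, r - F' * G' = (r - (Fk K) * (Gk K))
        - ((Fk K) * (G' - Gk K) + (F' - Fk K) * (Gk K) + (F' - Fk K) * (G' - Gk K)) := by
      intro K; ring
    have hfinal : r = F' * G' := by
      rw [← sub_eq_zero]
      refine Polynomial.ext fun i => eq_zero_of_forall_vge fun ρ => ?_
      obtain ⟨K, hK⟩ := exists_nat_ge ((ρ - δ₀) / δ₀)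
      have hρK : ρ ≤ δ₀ + K * δ₀ := by
        have := (div_le_iff₀ hδ₀pos).mp hK
        linarith
      refine vge_of_le ?_ hρK
      rw [hiden K]
      have hP := huP K
      refine pv_sub hP.2.2.2.2.2.2.2.2.2.2.1 (pv_add (pv_add ?_ ?_) ?_) i
      · have h1 := pv_mul hP.2.2.2.2.1 (hRG K)
        rwa [zero_add] at h1
      · have h1 := pv_mul (hRF K) hP.2.2.2.2.2.1
        rwa [add_zero] at h1
      · have h1 := pv_mul (hRF K) (hRG K)
        refine pv_of_le h1 ?_
        have hK0 : (0:ℝ) ≤ K * δ₀ := by positivity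
        nlinarith
    -- conclude
    have hdegsum : (∑ i ∈ Finset.range a, Polynomial.C (S i) * Polynomial.X ^ i).degree
        < F₀.degree := by
      rw [hF₀deg]; exact csum_degree_lt a S
    refine ⟨F', G', hfinal, hF₀m.add_of_left hdegsum, ?_, ?_⟩
    · rw [hF', Polynomial.natDegree_eq_of_degree_eq
        (Polynomial.degree_add_eq_left_of_degree_lt hdegsum), hF₀nat]
    · rw [hF']
      exact pgp_add (pgp_mapCH f₀)
        (pgp_finsum fun i _ => pgp_mul (pgp_C (hSgp i)) (pgp_X_pow i))

/-! ### Tschirnhaus computation -/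

theorem hasse_nm1 (q : Polynomial H) (n : ℕ) (h2 : 2 ≤ n) (hdeg : q.natDegree = n)
    (hmon : q.Monic) :
    Polynomial.hasseDeriv (n - 1) q
      = Polynomial.C (q.coeff (n - 1)) + Polynomial.C ((n : H)) * Polynomial.X := by
  ext j
  rw [Polynomial.hasseDeriv_coeff]
  match j with
  | 0 =>
    simp only [Nat.zero_add, Nat.choose_self, Nat.cast_one, one_mul, Polynomial.coeff_add,
      Polynomial.coeff_C_zero, Polynomial.coeff_C_mul, Polynomial.coeff_X_zero, mul_zero, add_zero]
  | 1 =>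
    have h1 : 1 + (n - 1) = n := by omega
    have h2' : n.choose (n - 1) = n := by
      rw [Nat.choose_symm (by omega : 1 ≤ n), Nat.choose_one_right]
    rw [h1, h2']
    have h3 : q.coeff n = 1 := by
      have := hmon.coeff_natDegree
      rwa [hdeg] at this
    rw [h3, mul_one]
    simp [Polynomial.coeff_C, (by omega : ¬ (1 = 0))]
  | (j + 2) =>
    have h1 : q.coeff (j + 2 + (n - 1)) = 0 := by
      refine Polynomial.coeff_eq_zero_of_natDegree_lt ?_
      omega
    rw [h1, mul_zero]
    have : ¬ (j + 2 = 0) := by omega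
    simp [Polynomial.coeff_C, this, Polynomial.coeff_X, (by omega : ¬ (j + 2 = 1))]

/-! ### main lemma : every monic nonconstant polynomial with GP coefficients has a GP root -/

theorem main_lemma (n : ℕ) : ∀ q : Polynomial H, q.Monic → PGP q → q.natDegree = n → 1 ≤ n →
    ∃ y : H, IsGenPuiseux y ∧ q.eval y = 0 := by
  induction n using Nat.strong_induction_on with
  | _ n IH =>
  intro q hq hqGP hqdeg hn1
  classical
  rcases eq_or_lt_of_le hn1 with hn1' | hn2
  · -- degree 1
    have hq1 : q = Polynomial.X + Polynomial.C (q.coeff 0) := hq.eq_X_add_C (by omega)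
    refine ⟨-(q.coeff 0), gp_neg (hqGP 0), ?_⟩
    rw [hq1]
    simp
  · have h2n : 2 ≤ n := hn2
    -- Tschirnhaus shift
    have hnH : ((n : ℂ)) ≠ 0 := Nat.cast_ne_zero.mpr (by omega)
    set s : H := -(q.coeff (n - 1)) * HahnSeries.C ((n : ℂ))⁻¹ with hs
    have hsGP : IsGenPuiseux s := gp_mul (gp_neg (hqGP (n - 1))) (gp_C _)
    set q1 : Polynomial H := Polynomial.taylor s q with hq1def
    have hq1monic : q1.Monic := by
      rw [hq1def, Polynomial.taylor_apply]
      exact hq.comp_X_add_C s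
    have hq1deg : q1.natDegree = n := by rw [hq1def, Polynomial.natDegree_taylor, hqdeg]
    have hq1GP : PGP q1 := by
      intro i
      rw [hq1def, Polynomial.taylor_coeff]
      refine pgp_eval ?_ hsGP
      intro j
      rw [Polynomial.hasseDeriv_coeff]
      exact gp_mul (gp_natCast _) (hqGP _)
    have hCn : (HahnSeries.C ((n : ℂ))) = ((n : H)) := by
      rw [map_natCast]
    have hq1c : q1.coeff (n - 1) = 0 := by
      rw [hq1def, Polynomial.taylor_coeff, hasse_nm1 q n h2n hqdeg hq]
      simp only [Polynomial.eval_add, Polynomial.eval_C, Polynomial.eval_mul, Polynomial.eval_X]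
      rw [hs, ← hCn]
      have hCinv : (HahnSeries.C ((n : ℂ)) : H) * HahnSeries.C ((n : ℂ))⁻¹ = 1 := by
        rw [← map_mul, mul_inv_cancel₀ hnH, map_one]
      calc q.coeff (n-1) + HahnSeries.C ((n:ℂ)) * (-(q.coeff (n - 1)) * HahnSeries.C ((n : ℂ))⁻¹)
          = q.coeff (n-1) - (HahnSeries.C ((n:ℂ)) * HahnSeries.C ((n:ℂ))⁻¹) * q.coeff (n-1) := by
            ring
        _ = 0 := by rw [hCinv]; ring
    by_cases hc0 : q1.coeff 0 = 0
    · -- `s` is already a root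
      refine ⟨s, hsGP, ?_⟩
      have h3 := Polynomial.taylor_eval s q 0
      rw [← hq1def, ← Polynomial.coeff_zero_eq_eval_zero, hc0, zero_add] at h3
      exact h3.symm
    · -- Newton polygon
      set β : ℝ := (q1.coeff 0).order with hβ
      set I : Finset ℕ := (Finset.range (n + 1)).filter (fun i => 1 ≤ i ∧ q1.coeff i ≠ 0)
        with hI
      have hq1n : q1.coeff n = 1 := by
        have := hq1monic.coeff_natDegree
        rwa [hq1deg] at this
      have hnI : n ∈ I := by
        rw [hI, Finset.mem_filter, Finset.mem_range]
        exact ⟨by omega, by omega, by rw [hq1n]; exact one_ne_zero⟩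
      have hInonempty : I.Nonempty := ⟨n, hnI⟩
      set σ : ℕ → ℝ := fun i => (β - (q1.coeff i).order) / i with hσ
      set μ : ℝ := (I.image σ).max' (hInonempty.image σ) with hμ
      set J : Finset ℕ := I.filter (fun i => σ i = μ) with hJ
      have hJnonempty : J.Nonempty := by
        have hmem := (I.image σ).max'_mem (hInonempty.image σ)
        rw [← hμ] at hmem
        obtain ⟨i, hiI, hiσ⟩ := Finset.mem_image.mp hmem
        exact ⟨i, by rw [hJ, Finset.mem_filter]; exact ⟨hiI, hiσ⟩⟩
      set D : ℕ := J.max' hJnonempty with hD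
      have hDJ : D ∈ J := J.max'_mem hJnonempty
      have hDI : D ∈ I := (Finset.mem_filter.mp hDJ).1
      have hσD : σ D = μ := (Finset.mem_filter.mp hDJ).2
      have hD1 : 1 ≤ D := ((Finset.mem_filter.mp hDI).2).1
      have hDne : q1.coeff D ≠ 0 := ((Finset.mem_filter.mp hDI).2).2
      have hDn : D ≤ n := by
        have := (Finset.mem_filter.mp hDI).1
        rw [Finset.mem_range] at this
        omega
      have hσle : ∀ i ∈ I, σ i ≤ μ := fun i hi =>
        Finset.le_max' _ _ (Finset.mem_image_of_mem σ hi)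
      -- lower bounds for coefficient valuations
      have hvge : ∀ i, vge (q1.coeff i) (β - i * μ) := by
        intro i
        by_cases hne : q1.coeff i = 0
        · rw [hne]; exact vge_zero _
        · rcases Nat.eq_zero_or_pos i with rfl | hi1
          · refine vge_of_le (vge_order hne) (le_of_eq ?_)
            rw [hβ]; push_cast; ring
          · have hiI : i ∈ I := by
              rw [hI, Finset.mem_filter, Finset.mem_range]
              have hile : i ≤ n := by
                by_contra hgt
                exact hne (Polynomial.coeff_eq_zero_of_natDegree_lt (by omega))
              exact ⟨by omega, by omega, hne⟩
            have h1 := hσle i hiI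
            simp only [hσ] at h1
            have hipos : (0:ℝ) < i := by exact_mod_cast hi1
            have h2 : β - (q1.coeff i).order ≤ i * μ := by
              have := (div_le_iff₀ hipos).mp h1
              linarith [this]
            exact vge_of_le (vge_order hne) (by linarith)
      set b : ℕ → ℂ := fun i => (q1.coeff i).coeff (β - i * μ) with hb
      have hb0 : b 0 ≠ 0 := by
        simp only [hb]
        have h1 : β - ((0:ℕ):ℝ) * μ = β := by push_cast; ring
        rw [h1, hβ]
        exact HahnSeries.coeff_order_eq_zero.not.2 hc0
      have hordD : (q1.coeff D).order = β - D * μ := by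
        have h1 := hσD
        simp only [hσ] at h1
        have hDpos : (0:ℝ) < D := by exact_mod_cast hD1
        field_simp at h1
        linarith [h1]
      have hbD : b D ≠ 0 := by
        simp only [hb]
        rw [← hordD]
        exact HahnSeries.coeff_order_eq_zero.not.2 hDne
      have hbgt : ∀ i, D < i → b i = 0 := by
        intro i hDi
        by_cases hne : q1.coeff i = 0
        · simp only [hb]
          rw [hne, HahnSeries.coeff_zero]
        · have hile : i ≤ n := by
            by_contra hgt
            exact hne (Polynomial.coeff_eq_zero_of_natDegree_lt (by omega))
          have hiI : i ∈ I := by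
            rw [hI, Finset.mem_filter, Finset.mem_range]
            exact ⟨by omega, by omega, hne⟩
          have hσi : σ i < μ := by
            rcases lt_or_eq_of_le (hσle i hiI) with h | h
            · exact h
            · exfalso
              have hiJ : i ∈ J := by rw [hJ, Finset.mem_filter]; exact ⟨hiI, h⟩
              have := Finset.le_max' J i hiJ
              rw [← hD] at this
              omega
          simp only [hσ] at hσi
          have hipos : (0:ℝ) < i := by
            have := (Finset.mem_filter.mp hiI).2.1
            exact_mod_cast this
          have h2 : β - i * μ < (q1.coeff i).order := by
            have := (div_lt_iff₀ hipos).mp hσi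
            linarith
          simp only [hb]
          exact HahnSeries.coeff_eq_zero_of_lt_order h2
      -- the scaled polynomial
      set tμ : H := HahnSeries.single μ 1 with htμ
      set tmb : H := HahnSeries.single (-β) 1 with htmb
      set r : Polynomial H := Polynomial.C tmb * scaleP tμ q1 with hr
      have hrc : ∀ i : ℕ, r.coeff i = HahnSeries.single ((i:ℝ) * μ - β) 1 * q1.coeff i := by
        intro i
        rw [hr, Polynomial.coeff_C_mul, scaleP_coeff, htμ, htmb, HahnSeries.single_pow,
          one_pow, ← mul_assoc, HahnSeries.single_mul_single, one_mul]
        have he : -β + (i:ℝ) • μ = (i:ℝ) * μ - β := by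
          rw [smul_eq_mul]; ring
        rw [show (i • μ : ℝ) = (i:ℝ) * μ from by rw [nsmul_eq_mul], show -β + (i:ℝ)*μ = (i:ℝ) * μ - β from by ring]
      have hrres : ∀ i : ℕ, (r.coeff i).coeff 0 = b i := by
        intro i
        rw [hrc, hb]
        have h0 : (0:ℝ) = (β - i * μ) + ((i:ℝ) * μ - β) := by ring
        rw [h0, HahnSeries.coeff_single_mul_add, one_mul]
      have hrPV : PV 0 r := by
        intro i
        rw [hrc]
        have h1 := vge_mul (vge_single ((i:ℝ) * μ - β) 1) (hvge i)
        refine vge_of_le h1 (le_of_eq ?_)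
        ring
      have hrGP : PGP r := by
        intro i
        rw [hrc]
        exact gp_mul (gp_single _ _) (hq1GP i)
      have hrn : r.coeff n = HahnSeries.single ((n:ℝ) * μ - β) 1 := by
        rw [hrc, hq1n, mul_one]
      have hrdeg : r.natDegree = n := by
        refine le_antisymm ?_ ?_
        · refine Polynomial.natDegree_le_iff_coeff_eq_zero.mpr fun N hN => ?_
          rw [hrc, Polynomial.coeff_eq_zero_of_natDegree_lt (by omega), mul_zero]
        · refine Polynomial.le_natDegree_of_ne_zero ?_
          rw [hrn]
          exact HahnSeries.single_ne_zero one_ne_zero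
      -- residue polynomial
      set rb : Polynomial ℂ := resP r with hrb
      have hrbc : ∀ i, rb.coeff i = b i := by
        intro i
        rw [hrb, resP_coeff, hrres]
      have hrbne : rb ≠ 0 := fun h => hbD (by rw [← hrbc, h, Polynomial.coeff_zero])
      have hrbdeg : rb.natDegree = D := by
        refine le_antisymm ?_ ?_
        · refine Polynomial.natDegree_le_iff_coeff_eq_zero.mpr fun N hN => ?_
          rw [hrbc]; exact hbgt N hN
        · exact Polynomial.le_natDegree_of_ne_zero (by rw [hrbc]; exact hbD)
      -- a root of the residue polynomial
      obtain ⟨c, hc⟩ := Complex.exists_root (f := rb) (by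
        rw [Polynomial.degree_eq_natDegree hrbne, hrbdeg]
        exact_mod_cast hD1)
      have hcne : c ≠ 0 := by
        intro h0
        rw [h0] at hc
        have := hc
        rw [Polynomial.IsRoot, ← Polynomial.coeff_zero_eq_eval_zero, hrbc] at this
        exact hb0 this
      set d : ℕ := Polynomial.rootMultiplicity c rb with hd
      have hd1 : 1 ≤ d := (Polynomial.rootMultiplicity_pos hrbne).mpr hc
      set f₀ : Polynomial ℂ := (Polynomial.X - Polynomial.C c) ^ d with hf₀
      set g₀ : Polynomial ℂ := rb /ₘ ((Polynomial.X - Polynomial.C c) ^ d) with hg₀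
      have hfmon : f₀.Monic := (Polynomial.monic_X_sub_C c).pow d
      have hfdeg : f₀.natDegree = d := by
        rw [hf₀, Polynomial.natDegree_pow, Polynomial.natDegree_X_sub_C, mul_one]
      have hfact : f₀ * g₀ = rb := by
        rw [hf₀, hg₀, hd]
        exact Polynomial.pow_mul_divByMonic_rootMultiplicity_eq rb c
      have hg₀c : g₀.eval c ≠ 0 := by
        rw [hg₀, hd]
        exact Polynomial.eval_divByMonic_pow_rootMultiplicity_ne_zero c hrbne
      have hg₀ne : g₀ ≠ 0 := fun h => hg₀c (by rw [h]; simp)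
      have hcop : IsCoprime f₀ g₀ := by
        refine IsCoprime.pow_left ?_
        refine (Polynomial.irreducible_X_sub_C c).coprime_iff_not_dvd.mpr ?_
        intro hdvd
        exact hg₀c (Polynomial.dvd_iff_isRoot.mp hdvd)
      have hDsum : d + g₀.natDegree = D := by
        have h1 := Polynomial.natDegree_mul (hfmon.ne_zero) hg₀ne
        rw [hfact, hrbdeg, hfdeg] at h1
        omega
      -- key bound : d < n
      have hdn : d < n := by
        by_contra hge
        push_neg at hge
        have hDeq : D = n := by omega
        have hdeq : d = n := by omega
        have hg₀deg : g₀.natDegree = 0 := by omega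
        -- the residue polynomial is monic
        have hβn : β = n * μ := by
          have h1 := hσD
          simp only [hσ, hDeq] at h1
          have h2 : (q1.coeff n).order = 0 := by rw [hq1n, HahnSeries.order_one]
          rw [h2, sub_zero] at h1
          have hnpos : (0:ℝ) < n := by exact_mod_cast (by omega : 0 < n)
          rw [hμ] at h1
          field_simp at h1
          linarith [h1]
        have hbn : b n = 1 := by
          simp only [hb]
          rw [hq1n]
          have : β - (n:ℝ) * μ = 0 := by rw [hβn]; ring
          rw [this]
          simp [HahnSeries.coeff_one]
        have hrbmon : rb.Monic := by
          rw [Polynomial.Monic, Polynomial.leadingCoeff, hrbdeg, hDeq, hrbc]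
          exact hbn
        have hg₀C : g₀ = Polynomial.C (g₀.coeff 0) := Polynomial.eq_C_of_natDegree_eq_zero hg₀deg
        have hg₀1 : g₀.coeff 0 = 1 := by
          have h1 : rb.leadingCoeff = f₀.leadingCoeff * g₀.leadingCoeff := by
            rw [← hfact, Polynomial.leadingCoeff_mul]
          rw [hrbmon.leadingCoeff, hfmon.leadingCoeff, one_mul] at h1
          rw [hg₀C] at h1 ⊢
          simpa using h1.symm
        have hrbeq : rb = (Polynomial.X - Polynomial.C c) ^ n := by
          rw [← hfact, hg₀C, hg₀1, map_one, mul_one, hf₀, hdeq]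
        -- next coefficient vanishes
        have hnext : rb.coeff (n - 1) = 0 := by
          rw [hrbc]
          simp only [hb]
          rw [hq1c, HahnSeries.coeff_zero]
        have hnext2 : rb.nextCoeff = 0 := by
          rw [Polynomial.nextCoeff_of_natDegree_pos (by rw [hrbdeg]; omega), hrbdeg, hDeq, hnext]
        have hsum := (IsAlgClosed.splits rb).nextCoeff_eq_neg_sum_roots_of_monic
          hrbmon
        rw [hnext2] at hsum
        have hroots : rb.roots = n • ({c} : Multiset ℂ) := by
          rw [hrbeq, Polynomial.roots_pow, Polynomial.roots_X_sub_C]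
        rw [hroots] at hsum
        have : (n • ({c} : Multiset ℂ)).sum = n • c := by
          rw [Multiset.sum_nsmul, Multiset.sum_singleton]
        rw [this] at hsum
        have : (n : ℂ) * c = 0 := by
          have := hsum.symm
          rw [neg_eq_zero] at this
          rw [← nsmul_eq_mul]
          exact this
        rcases mul_eq_zero.mp this with h | h
        · exact hnH h
        · exact hcne h
      -- apply Hensel
      obtain ⟨F, G, hrFG, hFmon, hFdeg, hFgp⟩ := hensel r n hrdeg hrGP hrPV f₀ g₀
        hfmon (by omega) hcop (by omega) hfact.symm
      have hFdeg' : F.natDegree = d := by rw [hFdeg, hfdeg]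
      obtain ⟨y₀, hy₀GP, hy₀root⟩ := IH d hdn F hFmon hFgp hFdeg' hd1
      -- unwind
      have hrval : r.eval y₀ = 0 := by rw [hrFG, Polynomial.eval_mul, hy₀root, zero_mul]
      have hq1val : q1.eval (tμ * y₀) = 0 := by
        rw [hr, Polynomial.eval_mul, Polynomial.eval_C, scaleP_eval] at hrval
        rcases mul_eq_zero.mp hrval with h | h
        · exact absurd h (by rw [htmb]; exact HahnSeries.single_ne_zero one_ne_zero)
        · exact h
      refine ⟨tμ * y₀ + s, gp_add (gp_mul (by rw [htμ]; exact gp_single μ 1) hy₀GP) hsGP, ?_⟩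
      have := Polynomial.taylor_eval s q (tμ * y₀)
      rw [← hq1def, hq1val] at this
      exact this.symm

end GenP

/-- The field `𝕂` of generalised Puiseux series over `ℂ` is algebraically closed:
every non-constant polynomial with coefficients in `𝕂` has a root in `𝕂`. -/
theorem genPuiseux_algClosed (p : Polynomial (HahnSeries ℝ ℂ)) (hdeg : 0 < p.degree)
    (hcoeff : ∀ i, IsGenPuiseux (p.coeff i)) :
    ∃ y : HahnSeries ℝ ℂ, IsGenPuiseux y ∧ Polynomial.eval y p = 0 := by
  have hp0 : p ≠ 0 := fun h => by simp [h] at hdeg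
  have hlc : p.leadingCoeff ≠ 0 := Polynomial.leadingCoeff_ne_zero.mpr hp0
  have hlcinv : (p.leadingCoeff)⁻¹ ≠ 0 := inv_ne_zero hlc
  set q : Polynomial (HahnSeries ℝ ℂ) := p * Polynomial.C (p.leadingCoeff)⁻¹ with hq
  have hqm : q.Monic := Polynomial.monic_mul_leadingCoeff_inv hp0
  have hlcGP : IsGenPuiseux (p.leadingCoeff)⁻¹ :=
    GenP.gp_inv (hcoeff p.natDegree)
  have hqGP : GenP.PGP q := by
    intro i
    rw [hq, Polynomial.coeff_mul_C]
    exact GenP.gp_mul (hcoeff i) hlcGP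
  have hqdeg : q.natDegree = p.natDegree := by
    rw [hq, Polynomial.natDegree_mul hp0 (fun h => hlcinv (by simpa using Polynomial.C_eq_zero.mp h)),
      Polynomial.natDegree_C, add_zero]
  have hn1 : 1 ≤ q.natDegree := by
    rw [hqdeg]
    exact Polynomial.natDegree_pos_iff_degree_pos.mpr hdeg
  obtain ⟨y, hyGP, hyroot⟩ := GenP.main_lemma q.natDegree q hqm hqGP rfl hn1
  refine ⟨y, hyGP, ?_⟩
  rw [hq, Polynomial.eval_mul, Polynomial.eval_C] at hyroot
  rcases mul_eq_zero.mp hyroot with h | h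
  · exact h
  · exact absurd h hlcinv
end

section
/- The field 𝕂 of generalised Puiseux series over ℂ is complete with respect to the norm |f| = exp(−val(f)) (with |0| = 0): every Cauchy sequence in 𝕂 with respect to |·| converges to an element of 𝕂. -/
open Classical

/-- The norm `|f| = exp (-val f)` on generalised Puiseux series, with `|0| = 0`. -/
noncomputable def gpNorm (f : HahnSeries ℝ ℂ) : ℝ :=
  if f = 0 then 0 else Real.exp (-f.order)

lemma coeff_eq_of_gpNorm_lt {a b : HahnSeries ℝ ℂ} {α : ℝ}
    (h : gpNorm (a - b) < Real.exp (-α)) : a.coeff α = b.coeff α := by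
  by_cases hz : a - b = 0
  · rw [sub_eq_zero.mp hz]
  · have h' : Real.exp (-(a - b).order) < Real.exp (-α) := by
      simpa [gpNorm, hz] using h
    have hlt : α < (a - b).order := by
      have := Real.exp_lt_exp.mp h'; linarith
    have hc := HahnSeries.coeff_eq_zero_of_lt_order hlt
    rw [HahnSeries.coeff_sub] at hc
    linear_combination hc

lemma isPWO_of_finite_Iic {S : Set ℝ} (h : ∀ M : ℝ, (S ∩ Set.Iic M).Finite) :
    S.IsPWO := by
  refine Set.IsWF.isPWO ?_
  rw [Set.isWF_iff_no_descending_seq]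
  intro u hu hmem
  have hfin := h (u 0)
  have : Set.InjOn u Set.univ := fun a _ b _ hab => hu.injective hab
  have hsub : Set.range u ⊆ S ∩ Set.Iic (u 0) := by
    rintro _ ⟨n, rfl⟩
    exact ⟨hmem n, hu.antitone (Nat.zero_le n)⟩
  have : (Set.range u).Infinite := Set.infinite_range_of_injective hu.injective
  exact this (hfin.subset hsub)

/-- The field `𝕂` of generalised Puiseux series over `ℂ` is complete with respect to the
norm `|f| = exp (-val f)`: every Cauchy sequence in `𝕂` converges to an element of `𝕂`. -/
theorem genPuiseux_complete (f : ℕ → HahnSeries ℝ ℂ) (hf : ∀ n, IsGenPuiseux (f n))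
    (hcauchy : ∀ ε : ℝ, 0 < ε → ∃ N : ℕ, ∀ n ≥ N, ∀ m ≥ N, gpNorm (f n - f m) < ε) :
    ∃ g : HahnSeries ℝ ℂ, IsGenPuiseux g ∧
      ∀ ε : ℝ, 0 < ε → ∃ N : ℕ, ∀ n ≥ N, gpNorm (f n - g) < ε := by
  choose N hN using fun α : ℝ => hcauchy (Real.exp (-α)) (Real.exp_pos _)
  set c : ℝ → ℂ := fun α => (f (N α)).coeff α with hcdef
  have hc : ∀ α : ℝ, ∀ n ≥ N α, (f n).coeff α = c α := fun α n hn =>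
    coeff_eq_of_gpNorm_lt (hN α n hn (N α) le_rfl)
  -- key: for any M, with its Cauchy index, c agrees with a fixed term below M
  have key : ∀ M : ℝ, ∃ K : ℕ, ∀ n ≥ K, ∀ α ≤ M, (f n).coeff α = c α := by
    intro M
    obtain ⟨K, hK⟩ := hcauchy (Real.exp (-M)) (Real.exp_pos _)
    refine ⟨K, fun n hn α hα => ?_⟩
    have h1 : (f (max n (N α))).coeff α = c α := hc α _ (le_max_right _ _)
    have h2 : (f n).coeff α = (f (max n (N α))).coeff α := by
      refine coeff_eq_of_gpNorm_lt (lt_of_lt_of_le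
        (hK n hn (max n (N α)) (le_trans hn (le_max_left _ _))) ?_)
      exact Real.exp_le_exp.mpr (by linarith)
    rw [h2, h1]
  have hsupp : ∀ M : ℝ, (Function.support c ∩ Set.Iic M).Finite := by
    intro M
    obtain ⟨K, hK⟩ := key M
    refine ((hf K M).subset ?_)
    rintro α ⟨hα, hαM⟩
    refine ⟨?_, hαM⟩
    have := hK K le_rfl α hαM
    simpa [HahnSeries.mem_support, this] using hα
  set g : HahnSeries ℝ ℂ := ⟨c, isPWO_of_finite_Iic hsupp⟩ with hg
  have hgc : ∀ α, g.coeff α = c α := fun α => rfl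
  refine ⟨g, hsupp, ?_⟩
  intro ε hε
  obtain ⟨M, hM⟩ : ∃ M : ℝ, Real.exp (-M) < ε :=
    ⟨-Real.log ε + 1, by
      have := Real.exp_log hε
      calc Real.exp (-(-Real.log ε + 1)) = Real.exp (Real.log ε - 1) := by ring_nf
        _ < Real.exp (Real.log ε) := Real.exp_lt_exp.mpr (by linarith)
        _ = ε := Real.exp_log hε⟩
  obtain ⟨K, hK⟩ := key M
  refine ⟨K, fun n hn => ?_⟩
  have hcoeff : ∀ α ≤ M, (f n - g).coeff α = 0 := by
    intro α hα
    rw [HahnSeries.coeff_sub, hgc, hK n hn α hα, sub_self]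
  by_cases hz : f n - g = 0
  · simpa [gpNorm, hz] using hε
  · have horder : M < (f n - g).order := by
      by_contra hle
      push_neg at hle
      exact (mt HahnSeries.coeff_order_eq_zero.mp hz) (hcoeff _ hle)
    calc gpNorm (f n - g) = Real.exp (-(f n - g).order) := by simp [gpNorm, hz]
      _ ≤ Real.exp (-M) := Real.exp_le_exp.mpr (by linarith)
      _ < ε := hM
end

section
/- Let k be an arbitrary field (of any characteristic). The field 𝕂_k of generalised Puiseux series over k is complete with respect to the norm |f| = exp(−val(f)) (with |0| = 0): every Cauchy sequence in 𝕂_k converges to an element of 𝕂_k. -/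
open Classical

def IsGenPuiseuxOver (k : Type*) [Zero k] (f : HahnSeries ℝ k) : Prop :=
  ∀ M : ℝ, (f.support ∩ Set.Iic M).Finite

noncomputable def gpNormOver (k : Type*) [Zero k] (f : HahnSeries ℝ k) : ℝ :=
  if f = 0 then 0 else Real.exp (-f.order)

private lemma gpA {k : Type*} [Field k] {h : HahnSeries ℝ k} {M : ℝ}
    (hlt : gpNormOver k h < Real.exp (-M)) : ∀ α ≤ M, h.coeff α = 0 := by
  intro α hα
  by_cases h0 : h = 0
  · simp [h0]
  · rw [gpNormOver, if_neg h0, Real.exp_lt_exp] at hlt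
    exact HahnSeries.coeff_eq_zero_of_lt_order (lt_of_le_of_lt hα (by linarith))

private lemma gpB {k : Type*} [Field k] {h : HahnSeries ℝ k} {M ε : ℝ}
    (hε : Real.exp (-M) < ε) (hz : ∀ α ≤ M, h.coeff α = 0) : gpNormOver k h < ε := by
  by_cases h0 : h = 0
  · rw [gpNormOver, if_pos h0]; exact lt_trans (Real.exp_pos _) hε
  · rw [gpNormOver, if_neg h0]
    refine lt_trans (Real.exp_lt_exp.2 ?_) hε
    have := mt HahnSeries.coeff_order_eq_zero.mp h0
    have hM : M < h.order := by
      by_contra hle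
      exact this (hz _ (le_of_not_gt hle))
    linarith

/-- For an arbitrary field `k` (of any characteristic), the field `𝕂_k` of generalised
Puiseux series over `k` is complete with respect to the norm `|f| = exp (-val f)`:
every Cauchy sequence in `𝕂_k` converges to an element of `𝕂_k`. -/
theorem genPuiseuxOver_complete (k : Type*) [Field k]
    (f : ℕ → HahnSeries ℝ k) (hf : ∀ n, IsGenPuiseuxOver k (f n))
    (hcauchy : ∀ ε : ℝ, 0 < ε → ∃ N : ℕ, ∀ n ≥ N, ∀ m ≥ N, gpNormOver k (f n - f m) < ε) :
    ∃ g : HahnSeries ℝ k, IsGenPuiseuxOver k g ∧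
      ∀ ε : ℝ, 0 < ε → ∃ N : ℕ, ∀ n ≥ N, gpNormOver k (f n - g) < ε := by
  -- stabilization index for each threshold M
  choose N hN using fun M : ℝ => hcauchy (Real.exp (-M)) (Real.exp_pos _)
  have hstab : ∀ M : ℝ, ∀ n ≥ N M, ∀ m ≥ N M, ∀ α ≤ M,
      (f n).coeff α = (f m).coeff α := by
    intro M n hn m hm α hα
    have := gpA (hN M n hn m hm) α hα
    simpa [sub_eq_zero] using this
  set c : ℝ → k := fun α => (f (N α)).coeff α with hcdef
  have hc : ∀ M : ℝ, ∀ n ≥ N M, ∀ α ≤ M, c α = (f n).coeff α := by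
    intro M n hn α hα
    have h1 : c α = (f (max (N α) n)).coeff α :=
      hstab α (N α) le_rfl _ (le_max_left _ _) α le_rfl
    have h2 : (f (max (N α) n)).coeff α = (f n).coeff α :=
      hstab M _ (le_trans hn (le_max_right _ _)) n hn α hα
    rw [h1, h2]
  have hsupp : ∀ M : ℝ, (Function.support c ∩ Set.Iic M).Finite := by
    intro M
    refine Set.Finite.subset (hf (N M) M) ?_
    rintro α ⟨hα1, hα2⟩
    refine ⟨?_, hα2⟩
    have : α ∈ Set.Iic M := hα2
    simp only [HahnSeries.mem_support]
    rw [← hc M (N M) le_rfl α this]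
    exact hα1
  have hpwo : (Function.support c).IsPWO := by
    refine Set.IsWF.isPWO ?_
    rw [Set.isWF_iff_no_descending_seq]
    intro s hs hmem
    have hinj : Function.Injective s := hs.injective
    have : (Set.range s).Finite := by
      refine Set.Finite.subset (hsupp (s 0)) ?_
      rintro x ⟨n, rfl⟩
      exact ⟨hmem n, hs.antitone (Nat.zero_le n)⟩
    exact Set.infinite_range_of_injective hinj this
  refine ⟨⟨c, hpwo⟩, hsupp, ?_⟩
  intro ε hε
  set M : ℝ := 1 - Real.log ε with hM
  have hMε : Real.exp (-M) < ε := by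
    have : Real.exp (-M) = ε * Real.exp (-1) := by
      rw [hM, neg_sub, sub_eq_add_neg, Real.exp_add, Real.exp_log hε]
    rw [this]
    nlinarith [Real.exp_lt_one_iff.2 (by norm_num : (-1:ℝ) < 0), Real.exp_pos (-1:ℝ)]
  refine ⟨N M, fun n hn => gpB hMε fun α hα => ?_⟩
  have : (f n).coeff α = c α := (hc M n hn α hα).symm
  simp [HahnSeries.coeff_sub, this, sub_eq_zero]
end

section
/- Let k be a field of characteristic p > 0 and let c ∈ k satisfy c^p = c (i.e. c lies in the prime field). Then the Hahn series ȳ = −c + Σ_{i=1}^∞ t^{−1/pⁱ} in HahnSeries ℝ k (the series with coefficient 1 at each exponent −1/pⁱ for i ≥ 1 and coefficient −c at exponent 0) satisfies the Artin–Schreier equation ȳ^p − ȳ − t^{−1} = 0, where t^{−1} denotes the single-term Hahn series with coefficient 1 at exponent −1. -/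
open Classical

/-- The Hahn series `ȳ = -c + ∑_{i ≥ 1} t^{-1/pⁱ}` over a field `k`: the coefficient at
exponent `0` is `-c`, the coefficient at each exponent `-1/pⁱ` (for `i ≥ 1`) is `1`, and
all other coefficients vanish.  Its support is well-ordered. -/
noncomputable def artinSchreierRoot (k : Type*) [Field k] (p : ℕ) (c : k) : HahnSeries ℝ k where
  coeff x :=
    if x = 0 then -c
    else if ∃ i : ℕ, 1 ≤ i ∧ x = -(1 / (p : ℝ) ^ i) then 1 else 0
  isPWO_support' := by
    apply Set.IsPWO.mono
      (t := insert (0 : ℝ) (Set.range fun i : ℕ => -(1 / (p : ℝ) ^ (i + 1))))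
    · apply Set.IsPWO.insert
      have huniv : (Set.univ : Set ℕ).IsPWO :=
        (Set.isWF_univ_iff.2 inferInstance).isPWO
      have : (Set.range fun i : ℕ => -(1 / (p : ℝ) ^ (i + 1)))
          = (fun i : ℕ => -(1 / (p : ℝ) ^ (i + 1))) '' Set.univ := by
        rw [Set.image_univ]
      rw [this]
      apply huniv.image_of_monotone
      intro i j hij
      rcases Nat.lt_or_ge p 2 with hp | hp
      · interval_cases p <;> simp
      · have hp1 : (1 : ℝ) ≤ (p : ℝ) := by exact_mod_cast Nat.one_le_of_lt hp
        have := one_div_pow_le_one_div_pow_of_le hp1 (Nat.add_le_add_right hij 1)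
        simpa using neg_le_neg this
    · intro x hx
      simp only [Function.mem_support] at hx
      by_cases h0 : x = 0
      · rw [h0]; exact Set.mem_insert 0 _
      · rw [if_neg h0] at hx
        by_cases h1 : ∃ i : ℕ, 1 ≤ i ∧ x = -(1 / (p : ℝ) ^ i)
        · obtain ⟨i, hi1, hxi⟩ := h1
          refine Set.mem_insert_of_mem _ ⟨i - 1, ?_⟩
          simp only
          rw [Nat.sub_add_cancel hi1, ← hxi]
        · rw [if_neg h1] at hx; exact absurd rfl hx

section Aux
variable {k : Type*} [Field k] {p : ℕ}

/-- Partial sum `-c + ∑_{i=1}^{n} t^{-1/pⁱ}`. -/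
noncomputable def asPartial (k : Type*) [Field k] (p : ℕ) (c : k) (n : ℕ) : HahnSeries ℝ k :=
  HahnSeries.single 0 (-c) + ∑ i ∈ Finset.range n, HahnSeries.single (-(1 / (p : ℝ) ^ (i + 1))) 1

lemma asExp_lt (hp : 1 < (p : ℝ)) {i j : ℕ} (h : i < j) :
    -(1 / (p : ℝ) ^ i) < -(1 / (p : ℝ) ^ j) := by
  have h0 : (0:ℝ) < (p:ℝ) ^ i := by positivity
  have := pow_lt_pow_right₀ hp h
  have := one_div_lt_one_div_of_lt h0 this
  linarith

lemma asExp_inj (hp : 1 < (p : ℝ)) : Function.Injective (fun i : ℕ => -(1 / (p : ℝ) ^ i)) :=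
  (strictMono_nat_of_lt_succ fun i => asExp_lt hp (Nat.lt_succ_self i)).injective

lemma asExp_neg (hp : 1 < (p : ℝ)) (i : ℕ) : -(1 / (p : ℝ) ^ i) < 0 := by
  have : (0:ℝ) < 1 / (p:ℝ) ^ i := by positivity
  linarith

lemma asPartial_coeff (hp : 1 < (p : ℝ)) (c : k) (n : ℕ) (x : ℝ) :
    (asPartial k p c n).coeff x =
      if x = 0 then -c
      else if ∃ i : ℕ, 1 ≤ i ∧ i ≤ n ∧ x = -(1 / (p : ℝ) ^ i) then 1 else 0 := by
  rw [asPartial, HahnSeries.coeff_add]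
  have hsum : (∑ i ∈ Finset.range n, HahnSeries.single (-(1/(p:ℝ)^(i+1))) (1:k)).coeff x
      = ∑ i ∈ Finset.range n, (HahnSeries.single (-(1/(p:ℝ)^(i+1))) (1:k)).coeff x :=
    map_sum (HahnSeries.coeff.addMonoidHom x) _ _
  rw [hsum]
  simp only [HahnSeries.coeff_single]
  by_cases hx0 : x = 0
  · subst hx0
    rw [if_pos rfl, if_pos rfl, Finset.sum_eq_zero, add_zero]
    intro i _
    rw [if_neg (asExp_neg hp (i+1)).ne']
  · rw [if_neg hx0, if_neg hx0, zero_add]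
    by_cases h : ∃ i : ℕ, 1 ≤ i ∧ i ≤ n ∧ x = -(1 / (p : ℝ) ^ i)
    · obtain ⟨j, hj1, hjn, rfl⟩ := h
      rw [if_pos ⟨j, hj1, hjn, rfl⟩]
      have hcond : ∀ i : ℕ, (-(1 / (p : ℝ) ^ j) = -(1 / (p : ℝ) ^ (i+1))) ↔ i = j - 1 := by
        intro i
        constructor
        · intro h; have := asExp_inj hp h; omega
        · rintro rfl
          have hj : j - 1 + 1 = j := by omega
          rw [hj]
      calc (∑ i ∈ Finset.range n, if -(1 / (p:ℝ)^j) = -(1 / (p:ℝ)^(i+1)) then (1:k) else 0)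
          = ∑ i ∈ Finset.range n, if i = j - 1 then (1:k) else 0 := by
            exact Finset.sum_congr rfl fun i _ => if_congr (hcond i) rfl rfl
        _ = 1 := by
            rw [Finset.sum_ite_eq' (Finset.range n) (j-1) (fun _ => (1:k))]
            rw [if_pos (Finset.mem_range.2 (by omega : j - 1 < n))]
    · rw [if_neg h, Finset.sum_eq_zero]
      intro i hi
      rw [if_neg]
      intro hx
      exact h ⟨i+1, by omega, by simpa using Finset.mem_range.1 hi, hx⟩


lemma artinSchreierRoot_coeff (c : k) (x : ℝ) :
    (artinSchreierRoot k p c).coeff x =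
      if x = 0 then -c
      else if ∃ i : ℕ, 1 ≤ i ∧ x = -(1 / (p : ℝ) ^ i) then 1 else 0 := rfl

lemma asRemainder_coeff_bound (hp : 1 < (p : ℝ)) (c : k) (n : ℕ) (x : ℝ)
    (hx : (artinSchreierRoot k p c - asPartial k p c n).coeff x ≠ 0) :
    -(1 / (p : ℝ) ^ n) < x ∧ x < 0 := by
  rw [HahnSeries.coeff_sub, artinSchreierRoot_coeff, asPartial_coeff hp] at hx
  by_cases hx0 : x = 0
  · rw [if_pos hx0, if_pos hx0, sub_self] at hx; exact absurd rfl hx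
  rw [if_neg hx0, if_neg hx0] at hx
  by_cases h : ∃ i : ℕ, 1 ≤ i ∧ x = -(1 / (p : ℝ) ^ i)
  · obtain ⟨i, hi1, rfl⟩ := h
    by_cases hin : i ≤ n
    · rw [if_pos (⟨i, hi1, rfl⟩ : ∃ i' : ℕ, 1 ≤ i' ∧ -(1 / (p : ℝ) ^ i) = -(1 / (p : ℝ) ^ i')),
        if_pos (⟨i, hi1, hin, rfl⟩ :
          ∃ i' : ℕ, 1 ≤ i' ∧ i' ≤ n ∧ -(1 / (p : ℝ) ^ i) = -(1 / (p : ℝ) ^ i')), sub_self] at hx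
      exact absurd rfl hx
    · exact ⟨asExp_lt hp (by omega), asExp_neg hp i⟩
  · rw [if_neg h, if_neg (fun ⟨i, hi1, _, hxi⟩ => h ⟨i, hi1, hxi⟩), sub_self] at hx
    exact absurd rfl hx

lemma pow_coeff_bound {r : HahnSeries ℝ k} {a : ℝ}
    (hr : ∀ x, r.coeff x ≠ 0 → a < x ∧ x < 0) :
    ∀ m : ℕ, 1 ≤ m → ∀ x, (r ^ m).coeff x ≠ 0 → (m : ℝ) * a < x ∧ x < 0 := by
  intro m hm
  induction m, hm using Nat.le_induction with
  | base => intro x hx; rw [pow_one] at hx; simpa using hr x hx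
  | succ m hm ih =>
    intro x hx
    have hx' : x ∈ (r ^ (m + 1)).support := hx
    rw [pow_succ] at hx'
    obtain ⟨g, hg, h, hh, hxe⟩ := HahnSeries.support_mul_subset hx'
    have hxe' : g + h = x := hxe
    have h1 := ih g ((HahnSeries.mem_support _ _).1 hg)
    have h2 := hr h ((HahnSeries.mem_support _ _).1 hh)
    subst hxe'
    constructor
    · push_cast; nlinarith [h1.1, h2.1]
    · linarith [h1.2, h2.2]


lemma asPartial_pow [Fact p.Prime] [CharP k p] (c : k) (hc : c ^ p = c) (n : ℕ) :
    asPartial k p c (n + 1) ^ p = HahnSeries.single (-1 : ℝ) 1 + asPartial k p c n := by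
  haveI : CharP (HahnSeries ℝ k) p :=
    charP_of_injective_ringHom (HahnSeries.C_injective (Γ := ℝ) (R := k)) p
  have hp0 : (p : ℝ) ≠ 0 := by
    exact_mod_cast (Fact.out : p.Prime).ne_zero
  rw [asPartial, add_pow_char, sum_pow_char]
  have h1 : HahnSeries.single (0 : ℝ) (-c) ^ p = HahnSeries.single (0 : ℝ) (-c) := by
    rw [HahnSeries.single_pow, smul_zero]
    congr 1
    have : (-c) ^ p = (-1) ^ p * c ^ p := by ring
    rw [this, neg_one_pow_char k, hc]; ring
  have h2 : ∀ i : ℕ, HahnSeries.single (-(1 / (p : ℝ) ^ (i + 1))) (1 : k) ^ p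
      = HahnSeries.single (-(1 / (p : ℝ) ^ i)) (1 : k) := by
    intro i
    have hexp : (p : ℕ) • (-(1 / (p : ℝ) ^ (i + 1))) = -(1 / (p : ℝ) ^ i) := by
      rw [nsmul_eq_mul, pow_succ]
      field_simp
    rw [HahnSeries.single_pow, one_pow, hexp]
  rw [h1]
  have h3 : ∑ i ∈ Finset.range (n + 1),
        HahnSeries.single (-(1 / (p : ℝ) ^ (i + 1))) (1 : k) ^ p
      = ∑ i ∈ Finset.range (n + 1), HahnSeries.single (-(1 / (p : ℝ) ^ i)) (1 : k) :=
    Finset.sum_congr rfl fun i _ => h2 i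
  rw [h3, Finset.sum_range_succ']
  have h4 : HahnSeries.single (-(1 / (p : ℝ) ^ (0:ℕ))) (1 : k)
      = HahnSeries.single (-1 : ℝ) 1 := by norm_num
  rw [h4, asPartial]
  abel

end Aux

/-- Let `k` be a field of characteristic `p > 0` and let `c ∈ k` satisfy `c ^ p = c`
(i.e. `c` lies in the prime field).  Then the Hahn series `ȳ = -c + ∑_{i ≥ 1} t^{-1/pⁱ}`
satisfies the Artin–Schreier equation `ȳ ^ p - ȳ - t⁻¹ = 0`, where `t⁻¹` is the
single-term Hahn series with coefficient `1` at exponent `-1`. -/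
theorem artinSchreierRoot_is_root (k : Type*) [Field k] (p : ℕ) [Fact p.Prime] [CharP k p]
    (c : k) (hc : c ^ p = c) :
    artinSchreierRoot k p c ^ p - artinSchreierRoot k p c
      - HahnSeries.single (-1 : ℝ) (1 : k) = 0 := by
  haveI : CharP (HahnSeries ℝ k) p :=
    charP_of_injective_ringHom (HahnSeries.C_injective (Γ := ℝ) (R := k)) p
  have hp1 : (1 : ℝ) < p := by exact_mod_cast (Fact.out : p.Prime).one_lt
  have hp0 : (p : ℝ) ≠ 0 := by positivity
  ext x
  simp only [HahnSeries.coeff_sub, HahnSeries.coeff_zero]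
  obtain ⟨n, hn⟩ : ∃ n : ℕ, ¬(-(1 / (p : ℝ) ^ n) < x ∧ x < 0) := by
    rcases le_or_gt 0 x with hx | hx
    · exact ⟨0, fun h => absurd h.2 (not_lt.2 hx)⟩
    · obtain ⟨n, hn'⟩ := pow_unbounded_of_one_lt (1 / (-x)) hp1
      refine ⟨n, fun h => ?_⟩
      have hx' : (0:ℝ) < -x := by linarith
      have h2 : 1 / (p : ℝ) ^ n < -x := by
        have := one_div_lt_one_div_of_lt (by positivity : (0:ℝ) < 1 / (-x)) hn'
        rwa [one_div_one_div] at this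
      linarith [h.1]
  have hpow : artinSchreierRoot k p c ^ p
      = asPartial k p c (n + 1) ^ p
        + (artinSchreierRoot k p c - asPartial k p c (n + 1)) ^ p := by
    conv_lhs => rw [show artinSchreierRoot k p c
      = asPartial k p c (n + 1) + (artinSchreierRoot k p c - asPartial k p c (n + 1)) by ring]
    rw [add_pow_char]
  have hr : ((artinSchreierRoot k p c - asPartial k p c (n + 1)) ^ p).coeff x = 0 := by
    by_contra hcon
    have hb := pow_coeff_bound (asRemainder_coeff_bound hp1 c (n + 1)) p
      (Fact.out : p.Prime).one_lt.le x hcon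
    apply hn
    have hexp : (p : ℝ) * (-(1 / (p : ℝ) ^ (n + 1))) = -(1 / (p : ℝ) ^ n) := by
      rw [pow_succ]
      field_simp
    exact ⟨by linarith [hb.1, hexp.ge, hexp.le], hb.2⟩
  rw [hpow, HahnSeries.coeff_add, hr, add_zero, asPartial_pow c hc n, HahnSeries.coeff_add]
  have hfinal : (asPartial k p c n).coeff x = (artinSchreierRoot k p c).coeff x := by
    rw [asPartial_coeff hp1, artinSchreierRoot_coeff]
    by_cases hx0 : x = 0
    · rw [if_pos hx0, if_pos hx0]
    rw [if_neg hx0, if_neg hx0]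
    by_cases h : ∃ i : ℕ, 1 ≤ i ∧ x = -(1 / (p : ℝ) ^ i)
    · obtain ⟨i, hi1, rfl⟩ := h
      have hin : i ≤ n := by
        by_contra hgt
        exact hn ⟨asExp_lt hp1 (by omega), asExp_neg hp1 i⟩
      rw [if_pos (⟨i, hi1, hin, rfl⟩ :
          ∃ i' : ℕ, 1 ≤ i' ∧ i' ≤ n ∧ -(1 / (p : ℝ) ^ i) = -(1 / (p : ℝ) ^ i')),
        if_pos (⟨i, hi1, rfl⟩ :
          ∃ i' : ℕ, 1 ≤ i' ∧ -(1 / (p : ℝ) ^ i) = -(1 / (p : ℝ) ^ i'))]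
    · rw [if_neg (fun ⟨i, hi1, _, hxi⟩ => h ⟨i, hi1, hxi⟩), if_neg h]
  rw [hfinal]
  ring
end

section
/- Let k be an algebraically closed field of characteristic p > 0. Then the field 𝕂_k of generalised Puiseux series over k is not algebraically closed: the Artin–Schreier polynomial F = y^p − y − t^{−1}, whose coefficients lie in 𝕂_k, has no root in 𝕂_k. -/
namespace GenPuiseuxAux

open HahnSeries

variable {k : Type*} [Field k]

lemma leadingCoeff_pow (x : HahnSeries ℝ k) (n : ℕ) :
    (x ^ n).leadingCoeff = x.leadingCoeff ^ n := by
  induction n with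
  | zero => simp [HahnSeries.leadingCoeff_one]
  | succ n ih =>
    rcases eq_or_ne x 0 with rfl | hx
    · simp [zero_pow (Nat.succ_ne_zero n), HahnSeries.leadingCoeff_zero]
    · rw [pow_succ, HahnSeries.leadingCoeff_eq,
        HahnSeries.order_mul (pow_ne_zero _ hx) hx,
        HahnSeries.coeff_mul_order_add_order, ih, pow_succ,
        HahnSeries.leadingCoeff_eq]

lemma coeff_pow_order (x : HahnSeries ℝ k) (n : ℕ) :
    (x ^ n).coeff (n • x.order) = x.leadingCoeff ^ n := by
  rw [← HahnSeries.order_pow, ← HahnSeries.leadingCoeff_eq, leadingCoeff_pow]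

variable {p : ℕ} [Fact p.Prime] [CharP k p]

instance : CharP (HahnSeries ℝ k) p :=
  charP_of_injective_ringHom (HahnSeries.C_injective (Γ := ℝ) (R := k)) p

lemma step {c : ℝ} (hc : c < 0) {a : k} (ha : a ≠ 0) {z : HahnSeries ℝ k}
    (hz : z ^ p - z = HahnSeries.single c a) :
    z ≠ 0 ∧ z.order = c / p ∧
      (z - HahnSeries.single (c / p) z.leadingCoeff) ^ p
        - (z - HahnSeries.single (c / p) z.leadingCoeff)
        = HahnSeries.single (c / p) z.leadingCoeff := by
  have hp1 : 1 < p := (Fact.out : p.Prime).one_lt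
  have hpR : (0 : ℝ) < p := by exact_mod_cast Nat.lt_of_lt_of_le Nat.zero_lt_one hp1.le
  have hpR1 : (1 : ℝ) < p := by exact_mod_cast hp1
  have hz0 : z ≠ 0 := by
    rintro rfl
    rw [zero_pow (by omega : p ≠ 0), sub_zero] at hz
    have := congrArg (fun f => HahnSeries.coeff f c) hz
    simp only [HahnSeries.coeff_zero, HahnSeries.coeff_single_same] at this
    exact ha this.symm
  have hzp : z ^ p = HahnSeries.single c a + z := by
    rw [← hz]; ring
  set g := z.order with hg
  have hb : z.leadingCoeff ≠ 0 := HahnSeries.leadingCoeff_ne_zero.mpr hz0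
  have horder : (z ^ p).order = p • g := by rw [HahnSeries.order_pow]
  have hsmul : (p • g : ℝ) = (p : ℝ) * g := by
    rw [nsmul_eq_mul]
  -- First show p * g = c
  have hpg : (p : ℝ) * g = c := by
    rcases lt_trichotomy ((p : ℝ) * g) c with h | h | h
    · -- p*g < c : contradiction
      exfalso
      have hgneg : g < 0 := by nlinarith
      have hpgg : (p : ℝ) * g < g := by
        nlinarith [mul_pos (sub_pos.mpr hpR1) (neg_pos.mpr hgneg)]
      have h1 : (z ^ p).coeff ((p : ℝ) * g) = z.leadingCoeff ^ p := by
        have := coeff_pow_order z p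
        rwa [hsmul] at this
      have h2 : z.coeff ((p : ℝ) * g) = 0 :=
        HahnSeries.coeff_eq_zero_of_lt_order hpgg
      have h3 : (HahnSeries.single c a).coeff ((p : ℝ) * g) = 0 :=
        HahnSeries.coeff_single_of_ne (ne_of_lt h)
      have := congrArg (fun f => HahnSeries.coeff f ((p : ℝ) * g)) hzp
      simp only [HahnSeries.coeff_add] at this
      rw [h1, h2, h3, add_zero] at this
      exact pow_ne_zero _ hb this
    · exact h
    · -- p*g > c : contradiction
      exfalso
      have hcg : c < g := by
        by_contra hle
        push_neg at hle
        nlinarith [mul_le_mul_of_nonneg_left hle hpR.le,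
          mul_pos (sub_pos.mpr hpR1) (neg_pos.mpr hc)]
      have h1 : (z ^ p).coeff c = 0 := by
        apply HahnSeries.coeff_eq_zero_of_lt_order
        rw [horder, hsmul]; exact h
      have h2 : z.coeff c = 0 := HahnSeries.coeff_eq_zero_of_lt_order hcg
      have h3 : (HahnSeries.single c a).coeff c = a := HahnSeries.coeff_single_same c a
      have := congrArg (fun f => HahnSeries.coeff f c) hzp
      simp only [HahnSeries.coeff_add] at this
      rw [h1, h2, h3, add_zero] at this
      exact ha this.symm
  have hgc : g = c / p := by
    rw [mul_comm] at hpg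
    exact (eq_div_iff hpR.ne').mpr hpg
  refine ⟨hz0, hgc, ?_⟩
  -- leading coefficient satisfies b ^ p = a
  have hbp : z.leadingCoeff ^ p = a := by
    have h1 : (z ^ p).coeff c = z.leadingCoeff ^ p := by
      have := coeff_pow_order z p
      rwa [hsmul, hpg] at this
    have hcg : c < g := by
      rw [hgc, lt_div_iff₀ hpR]
      nlinarith [mul_pos (sub_pos.mpr hpR1) (neg_pos.mpr hc)]
    have h2 : z.coeff c = 0 := HahnSeries.coeff_eq_zero_of_lt_order hcg
    have := congrArg (fun f => HahnSeries.coeff f c) hzp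
    simp only [HahnSeries.coeff_add] at this
    rw [h1, h2, HahnSeries.coeff_single_same, add_zero] at this
    exact this
  have hsp : (HahnSeries.single (c / p) z.leadingCoeff : HahnSeries ℝ k) ^ p
      = HahnSeries.single c a := by
    rw [HahnSeries.single_pow, hbp, nsmul_eq_mul]
    congr 1
    field_simp
  rw [sub_pow_char, hsp, ← hz]
  ring

end GenPuiseuxAux

/-- For an algebraically closed field `k` of characteristic `p > 0`, the field `𝕂_k` of
generalised Puiseux series over `k` is not algebraically closed: the Artin–Schreier
polynomial `F = y ^ p - y - t⁻¹` (whose coefficients lie in `𝕂_k`, `t⁻¹` being the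
single-term series with coefficient `1` at exponent `-1`) has no root in `𝕂_k`. -/
theorem genPuiseux_not_algClosed_charP (k : Type*) [Field k] [IsAlgClosed k]
    (p : ℕ) [Fact p.Prime] [CharP k p] :
    ¬ ∃ y : HahnSeries ℝ k, IsGenPuiseuxOver k y ∧
        y ^ p - y - HahnSeries.single (-1 : ℝ) (1 : k) = 0 := by
  rintro ⟨y, hy, hroot⟩
  have hp1 : 1 < p := (Fact.out : p.Prime).one_lt
  have hpR : (1 : ℝ) < p := by exact_mod_cast hp1
  have hpR0 : (0 : ℝ) < p := lt_trans zero_lt_one hpR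
  set c : ℕ → ℝ := fun n => -((p : ℝ) ^ n)⁻¹ with hcdef
  have hcneg : ∀ n, c n < 0 := fun n => by
    have h : (0 : ℝ) < ((p : ℝ) ^ n)⁻¹ := by positivity
    simp only [hcdef]
    linarith
  have hcdiv : ∀ n, c n / p = c (n + 1) := fun n => by
    simp only [hcdef]
    rw [pow_succ]
    field_simp
  have hcmono : StrictMono c := by
    intro m n hmn
    simp only [hcdef, neg_lt_neg_iff]
    apply inv_strictAnti₀
    · positivity
    · exact pow_lt_pow_right₀ hpR hmn
  have heq : y ^ p - y = HahnSeries.single (-1 : ℝ) (1 : k) := by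
    rwa [sub_eq_zero] at hroot
  have hc0 : c 0 = -1 := by simp [hcdef]
  -- main induction: a sequence of Artin-Schreier relations
  have main : ∀ n : ℕ, ∃ z : HahnSeries ℝ k, ∃ a : k, a ≠ 0 ∧
      z ^ p - z = HahnSeries.single (c n) a ∧
      ∀ x ∈ z.support, x ∈ y.support ∨ ∃ i ≤ n, x = c i := by
    intro n
    induction n with
    | zero =>
      exact ⟨y, 1, one_ne_zero, by rw [hc0]; exact heq, fun x hx => Or.inl hx⟩
    | succ n ih =>
      obtain ⟨z, a, ha, hz, hsupp⟩ := ih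
      obtain ⟨hz0, horder, hnext⟩ := GenPuiseuxAux.step (hcneg n) ha hz
      refine ⟨z - HahnSeries.single (c n / p) z.leadingCoeff, z.leadingCoeff,
        HahnSeries.leadingCoeff_ne_zero.mpr hz0, by rw [hcdiv n] at hnext ⊢; exact hnext, ?_⟩
      intro x hx
      have : z.coeff x ≠ 0 ∨ (HahnSeries.single (c n / p) z.leadingCoeff).coeff x ≠ 0 := by
        by_contra hcon
        push_neg at hcon
        apply hx
        simp only [HahnSeries.coeff_sub, hcon.1, hcon.2, sub_zero]
      rcases this with h | h
      · rcases hsupp x h with h' | ⟨i, hi, h'⟩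
        · exact Or.inl h'
        · exact Or.inr ⟨i, Nat.le_succ_of_le hi, h'⟩
      · right
        refine ⟨n + 1, le_refl _, ?_⟩
        by_contra hne
        exact h (HahnSeries.coeff_single_of_ne (by rw [hcdiv n]; exact hne))
  -- each c (n+1) is in the support of y
  have hmem : ∀ n : ℕ, c (n + 1) ∈ y.support := by
    intro n
    obtain ⟨z, a, ha, hz, hsupp⟩ := main n
    obtain ⟨hz0, horder, -⟩ := GenPuiseuxAux.step (hcneg n) ha hz
    have hord : z.order = c (n + 1) := by rw [horder, hcdiv n]
    have hmem' : c (n + 1) ∈ z.support := by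
      rw [← hord]
      exact fun h => hz0 (HahnSeries.coeff_order_eq_zero.mp h)
    rcases hsupp _ hmem' with h | ⟨i, hi, h⟩
    · exact h
    · exact absurd (hcmono.injective h) (by omega)
  -- contradiction with finiteness
  have hfin := hy 0
  have : Set.Infinite (y.support ∩ Set.Iic (0 : ℝ)) := by
    apply Set.infinite_of_injective_forall_mem (f := fun n : ℕ => c (n + 1))
    · intro m n hmn
      have := hcmono.injective (by simpa using hmn)
      omega
    · intro n
      exact ⟨hmem n, le_of_lt (hcneg (n + 1))⟩
  exact this hfin
end

section
/- The valuation ring R_val = {f ∈ 𝕂 : val(f) ≥ 0} ∪ {0} of the field 𝕂 of generalised Puiseux series over ℂ has Krull dimension one. -/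
/-- The valuation ring `R_val = {f ∈ 𝕂 : val f ≥ 0} ∪ {0}` of the field `𝕂` of
generalised Puiseux series, realised as a subring of `HahnSeries ℝ ℂ` (note that
`orderTop 0 = ⊤ ≥ 0`, so `0` belongs to the carrier). -/
noncomputable def genPuiseuxValuationRing : Subring (HahnSeries ℝ ℂ) where
  carrier := {f | IsGenPuiseux f ∧ 0 ≤ f.orderTop}
  zero_mem' := by
    constructor
    · intro M; simp [IsGenPuiseux, HahnSeries.support_zero]
    · simp [HahnSeries.orderTop_zero]
  one_mem' := by
    constructor
    · intro M
      exact (Set.finite_singleton (0 : ℝ)).subset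
        (Set.inter_subset_left.trans (by rw [HahnSeries.support_one]))
    · rw [HahnSeries.orderTop_one]
  add_mem' := by
    rintro a b ⟨haG, haO⟩ ⟨hbG, hbO⟩
    constructor
    · intro M
      refine ((haG M).union (hbG M)).subset ?_
      intro x hx
      rcases HahnSeries.support_add_subset _ _ hx.1 with h | h
      · exact Or.inl ⟨h, hx.2⟩
      · exact Or.inr ⟨h, hx.2⟩
    · exact le_trans (le_min haO hbO) HahnSeries.min_orderTop_le_orderTop_add
  neg_mem' := by
    rintro a ⟨haG, haO⟩
    constructor
    · intro M; rw [HahnSeries.support_neg]; exact haG M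
    · rw [HahnSeries.orderTop_neg]; exact haO
  mul_mem' := by
    rintro a b ⟨haG, haO⟩ ⟨hbG, hbO⟩
    refine ⟨?_, ?_⟩
    · intro M
      by_cases ha0 : a = 0
      · simp [ha0, IsGenPuiseux, HahnSeries.support_zero]
      by_cases hb0 : b = 0
      · simp [hb0, IsGenPuiseux, HahnSeries.support_zero]
      -- supports are nonempty well-founded sets, hence have minima
      have haWF : a.support.IsWF := a.isPWO_support.isWF
      have hbWF : b.support.IsWF := b.isPWO_support.isWF
      have hane : a.support.Nonempty := HahnSeries.support_nonempty_iff.2 ha0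
      have hbne : b.support.Nonempty := HahnSeries.support_nonempty_iff.2 hb0
      set ma := haWF.min hane with hma
      set mb := hbWF.min hbne with hmb
      have key : (a * b).support ∩ Set.Iic M ⊆
          (fun p : ℝ × ℝ => p.1 + p.2) ''
            ((a.support ∩ Set.Iic (M - mb)) ×ˢ (b.support ∩ Set.Iic (M - ma))) := by
        rintro x ⟨hxs, hxM⟩
        obtain ⟨α, hα, β, hβ, rfl⟩ := HahnSeries.support_mul_subset hxs
        refine ⟨(α, β), ⟨⟨hα, ?_⟩, ⟨hβ, ?_⟩⟩, rfl⟩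
        · simp only [Set.mem_Iic] at hxM ⊢
          linarith [hbWF.min_le hbne hβ]
        · simp only [Set.mem_Iic] at hxM ⊢
          linarith [haWF.min_le hane hα]
      exact (((haG (M - mb)).prod (hbG (M - ma))).image _).subset key
    · calc (0 : WithTop ℝ) = 0 + 0 := by rw [add_zero]
        _ ≤ a.orderTop + b.orderTop := add_le_add haO hbO
        _ ≤ (a * b).orderTop := HahnSeries.orderTop_add_le_mul


namespace GPAux

lemma isGP_of_support_subset {f : HahnSeries ℝ ℂ} {S : Set ℝ}
    (hS : ∀ M : ℝ, (S ∩ Set.Iic M).Finite) (h : f.support ⊆ S) : IsGenPuiseux f :=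
  fun M => (hS M).subset (Set.inter_subset_inter_left _ h)

lemma isGP_single (c : ℝ) (r : ℂ) : IsGenPuiseux (HahnSeries.single c r) := by
  intro M
  exact (Set.finite_singleton c).subset
    (Set.inter_subset_left.trans HahnSeries.support_single_subset)

lemma isGP_one : IsGenPuiseux (1 : HahnSeries ℝ ℂ) := by
  rw [← HahnSeries.single_zero_one]; exact isGP_single 0 1

lemma isGP_add {a b : HahnSeries ℝ ℂ} (ha : IsGenPuiseux a) (hb : IsGenPuiseux b) :
    IsGenPuiseux (a + b) := by
  intro M
  refine ((ha M).union (hb M)).subset ?_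
  rintro x ⟨hx, hxM⟩
  rcases HahnSeries.support_add_subset _ _ hx with h | h
  · exact Or.inl ⟨h, hxM⟩
  · exact Or.inr ⟨h, hxM⟩

lemma isGP_neg {a : HahnSeries ℝ ℂ} (ha : IsGenPuiseux a) : IsGenPuiseux (-a) := by
  intro M; rw [HahnSeries.support_neg]; exact ha M

lemma isGP_sub {a b : HahnSeries ℝ ℂ} (ha : IsGenPuiseux a) (hb : IsGenPuiseux b) :
    IsGenPuiseux (a - b) := by
  rw [sub_eq_add_neg]; exact isGP_add ha (isGP_neg hb)

lemma isGP_mul {a b : HahnSeries ℝ ℂ} (ha : IsGenPuiseux a) (hb : IsGenPuiseux b) :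
    IsGenPuiseux (a * b) := by
  intro M
  by_cases ha0 : a = 0
  · simp [ha0, IsGenPuiseux, HahnSeries.support_zero]
  by_cases hb0 : b = 0
  · simp [hb0, IsGenPuiseux, HahnSeries.support_zero]
  have haWF : a.support.IsWF := a.isPWO_support.isWF
  have hbWF : b.support.IsWF := b.isPWO_support.isWF
  have hane : a.support.Nonempty := HahnSeries.support_nonempty_iff.2 ha0
  have hbne : b.support.Nonempty := HahnSeries.support_nonempty_iff.2 hb0
  set ma := haWF.min hane with hma
  set mb := hbWF.min hbne with hmb
  have key : (a * b).support ∩ Set.Iic M ⊆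
      (fun p : ℝ × ℝ => p.1 + p.2) ''
        ((a.support ∩ Set.Iic (M - mb)) ×ˢ (b.support ∩ Set.Iic (M - ma))) := by
    rintro x ⟨hxs, hxM⟩
    obtain ⟨α, hα, β, hβ, rfl⟩ := HahnSeries.support_mul_subset hxs
    refine ⟨(α, β), ⟨⟨hα, ?_⟩, ⟨hβ, ?_⟩⟩, rfl⟩
    · simp only [Set.mem_Iic] at hxM ⊢
      linarith [hbWF.min_le hbne hβ]
    · simp only [Set.mem_Iic] at hxM ⊢
      linarith [haWF.min_le hane hα]
  exact (((ha (M - mb)).prod (hb (M - ma))).image _).subset key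

lemma isGP_pow {a : HahnSeries ℝ ℂ} (ha : IsGenPuiseux a) (n : ℕ) :
    IsGenPuiseux (a ^ n) := by
  induction n with
  | zero => simpa using isGP_one
  | succ n ih => rw [pow_succ]; exact isGP_mul ih ha


/-- iterated sumsets -/
def iterSum (F : Set ℝ) : ℕ → Set ℝ
  | 0 => {0}
  | n + 1 => Set.image2 (· + ·) F (iterSum F n)

lemma iterSum_finite {F : Set ℝ} (hF : F.Finite) : ∀ n, (iterSum F n).Finite
  | 0 => Set.finite_singleton 0
  | n + 1 => hF.image2 _ (iterSum_finite hF n)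

lemma sum_mem_iterSum {F : Set ℝ} : ∀ (m : Multiset ℝ), (∀ a ∈ m, a ∈ F) →
    m.sum ∈ iterSum F m.card := by
  intro m
  induction m using Multiset.induction_on with
  | empty => intro _; simp [iterSum]
  | cons a m ih =>
    intro h
    rw [Multiset.sum_cons, Multiset.card_cons]
    exact Set.mem_image2_of_mem (h a (Multiset.mem_cons_self a m))
      (ih fun b hb => h b (Multiset.mem_cons_of_mem hb))

lemma closure_GP {δ : ℝ} (hδ : 0 < δ) {S : Set ℝ} (hSδ : S ⊆ Set.Ici δ)
    (hS : ∀ M : ℝ, (S ∩ Set.Iic M).Finite) :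
    ∀ M : ℝ, ((AddSubmonoid.closure S : Set ℝ) ∩ Set.Iic M).Finite := by
  intro M
  set F : Set ℝ := S ∩ Set.Iic M with hF
  set N : ℕ := ⌈M / δ⌉₊ with hN
  have key : (AddSubmonoid.closure S : Set ℝ) ∩ Set.Iic M ⊆
      ⋃ n ∈ Set.Iic N, iterSum F n := by
    rintro x ⟨hx, hxM⟩
    obtain ⟨m, hm, rfl⟩ := AddSubmonoid.exists_multiset_of_mem_closure hx
    have hpos : ∀ a ∈ m, 0 ≤ a := fun a ha => le_of_lt (lt_of_lt_of_le hδ (hSδ (hm a ha)))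
    have hmem : ∀ a ∈ m, a ∈ F := by
      intro a ha
      refine ⟨hm a ha, ?_⟩
      have : m.sum = a + (m.erase a).sum := by
        rw [← Multiset.sum_cons, Multiset.cons_erase ha]
      have h2 : 0 ≤ (m.erase a).sum :=
        Multiset.sum_nonneg fun b hb => hpos b (Multiset.mem_of_mem_erase hb)
      simp only [Set.mem_Iic] at hxM ⊢
      linarith
    have hcard : m.card ≤ N := by
      have h1 : m.card • δ ≤ m.sum :=
        Multiset.card_nsmul_le_sum fun a ha => hSδ (hm a ha)
      rw [nsmul_eq_mul] at h1
      have h2 : (m.card : ℝ) ≤ M / δ := by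
        rw [le_div_iff₀ hδ]
        exact le_trans h1 hxM
      calc m.card = ⌈(m.card : ℝ)⌉₊ := (Nat.ceil_natCast _).symm
        _ ≤ N := Nat.ceil_le_ceil h2
    exact Set.mem_biUnion hcard (sum_mem_iterSum m hmem)
  exact ((Set.finite_Iic N).biUnion fun n _ => iterSum_finite (hS M) n).subset key


open HahnSeries in
lemma isGP_inv {f : HahnSeries ℝ ℂ} (hf : IsGenPuiseux f) : IsGenPuiseux f⁻¹ := by
  by_cases hf0 : f = 0
  · intro M; simp [hf0, HahnSeries.support_zero]
  set r : ℂ := f.leadingCoeff⁻¹ with hr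
  set u : HahnSeries ℝ ℂ := 1 - single (-f.order) r * f with hu_def
  have hu : 0 < u.orderTop :=
    HahnSeries.unit_aux f (inv_mul_cancel₀ (HahnSeries.leadingCoeff_ne_zero.mpr hf0)) _ (neg_add_cancel _)
  set y : HahnSeries ℝ ℂ :=
    single (-f.order) r * (SummableFamily.powers u).hsum with hy_def
  have hGPu : IsGenPuiseux u := isGP_sub isGP_one (isGP_mul (isGP_single _ _) hf)
  -- support of u lies in [δ, ∞) for some positive δ
  obtain ⟨δ, hδpos, hδ⟩ : ∃ δ : ℝ, 0 < δ ∧ u.support ⊆ Set.Ici δ := by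
    by_cases hu0 : u = 0
    · exact ⟨1, one_pos, by simp [hu0, HahnSeries.support_zero]⟩
    · refine ⟨u.order, ?_, fun g hg => HahnSeries.order_le_of_coeff_ne_zero hg⟩
      have := HahnSeries.order_eq_orderTop_of_ne_zero hu0
      rw [← this] at hu
      exact_mod_cast hu
  have hGPhsum : IsGenPuiseux (SummableFamily.powers u).hsum := by
    refine isGP_of_support_subset (closure_GP hδpos hδ hGPu) ?_
    refine SummableFamily.support_hsum_subset.trans ?_
    intro g hg
    simp only [Set.mem_iUnion] at hg
    obtain ⟨n, hn⟩ := hg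
    rw [SummableFamily.coe_powers hu] at hn
    clear_value u
    induction n generalizing g with
    | zero =>
      rw [pow_zero] at hn
      rw [HahnSeries.support_one, Set.mem_singleton_iff] at hn
      subst hn
      exact AddSubmonoid.zero_mem _
    | succ n ih =>
      rw [pow_succ] at hn
      obtain ⟨i, hi, j, hj, rfl⟩ := HahnSeries.support_mul_subset hn
      exact AddSubmonoid.add_mem _ (ih hi) (AddSubmonoid.subset_closure hj)
  have hfy : f * y = 1 := by
    have h := SummableFamily.one_sub_self_mul_hsum_powers hu
    have h1 : (1 : HahnSeries ℝ ℂ) - u = single (-f.order) r * f := by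
      rw [hu_def, sub_sub_cancel]
    rw [h1] at h
    calc f * y = single (-f.order) r * f * (SummableFamily.powers u).hsum := by
          rw [hy_def]; ring
      _ = 1 := h
  rw [← eq_inv_of_mul_eq_one_right hfy]
  exact isGP_mul (isGP_single _ _) hGPhsum

end GPAux

namespace GPAux

set_option synthInstance.maxHeartbeats 1000000

local notation "R" => genPuiseuxValuationRing

lemma coe_ne_zero {f : R} (hf : f ≠ 0) : (f : HahnSeries ℝ ℂ) ≠ 0 := by
  intro h
  exact hf (Subtype.ext (by rw [h, ZeroMemClass.coe_zero]))

lemma orderTop_coe_nonneg (f : R) : 0 ≤ (f : HahnSeries ℝ ℂ).orderTop := f.2.2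

/-- The maximal ideal of the valuation ring. -/
noncomputable def mId : Ideal R where
  carrier := {f | 0 < (f : HahnSeries ℝ ℂ).orderTop}
  zero_mem' := by
    show 0 < ((0 : R) : HahnSeries ℝ ℂ).orderTop
    rw [ZeroMemClass.coe_zero, HahnSeries.orderTop_zero]
    exact WithTop.top_pos
  add_mem' := by
    intro a b ha hb
    show 0 < ((a + b : R) : HahnSeries ℝ ℂ).orderTop
    rw [AddMemClass.coe_add]
    exact lt_of_lt_of_le (lt_min ha hb) HahnSeries.min_orderTop_le_orderTop_add
  smul_mem' := by
    intro c f hf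
    show 0 < ((c * f : R) : HahnSeries ℝ ℂ).orderTop
    rw [MulMemClass.coe_mul]
    have h1 : (0 : WithTop ℝ) < (c : HahnSeries ℝ ℂ).orderTop + (f : HahnSeries ℝ ℂ).orderTop :=
      lt_of_lt_of_le hf (le_add_of_nonneg_left c.2.2)
    exact lt_of_lt_of_le h1 HahnSeries.orderTop_add_le_mul

lemma mem_mId_iff {f : R} : f ∈ mId ↔ 0 < (f : HahnSeries ℝ ℂ).orderTop := ⟨fun h => h, fun h => h⟩

lemma mId_isPrime : mId.IsPrime := by
  constructor
  · intro h
    have h1 : (1 : R) ∈ mId := h ▸ Submodule.mem_top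
    rw [mem_mId_iff, OneMemClass.coe_one, HahnSeries.orderTop_one] at h1
    exact lt_irrefl _ h1
  · intro a b hab
    rw [mem_mId_iff, MulMemClass.coe_mul] at hab
    by_cases ha0 : a = 0
    · exact Or.inl (by rw [ha0]; exact mId.zero_mem)
    by_cases hb0 : b = 0
    · exact Or.inr (by rw [hb0]; exact mId.zero_mem)
    have hac := coe_ne_zero ha0
    have hbc := coe_ne_zero hb0
    rw [← HahnSeries.order_eq_orderTop_of_ne_zero (mul_ne_zero hac hbc),
      HahnSeries.order_mul hac hbc] at hab
    have hao : (0:ℝ) ≤ (a : HahnSeries ℝ ℂ).order := by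
      have := orderTop_coe_nonneg a
      rw [← HahnSeries.order_eq_orderTop_of_ne_zero hac] at this
      exact_mod_cast this
    have hbo : (0:ℝ) ≤ (b : HahnSeries ℝ ℂ).order := by
      have := orderTop_coe_nonneg b
      rw [← HahnSeries.order_eq_orderTop_of_ne_zero hbc] at this
      exact_mod_cast this
    have hsum : (0:ℝ) < (a : HahnSeries ℝ ℂ).order + (b : HahnSeries ℝ ℂ).order := by
      exact_mod_cast hab
    rcases lt_or_ge 0 (a : HahnSeries ℝ ℂ).order with h | h
    · refine Or.inl ?_
      rw [mem_mId_iff, ← HahnSeries.order_eq_orderTop_of_ne_zero hac]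
      exact_mod_cast h
    · refine Or.inr ?_
      rw [mem_mId_iff, ← HahnSeries.order_eq_orderTop_of_ne_zero hbc]
      have : (0:ℝ) < (b : HahnSeries ℝ ℂ).order := by linarith
      exact_mod_cast this

lemma inv_mem_R {f : R} (hf : f ≠ 0) (ho : (f : HahnSeries ℝ ℂ).order = 0) :
    (f : HahnSeries ℝ ℂ)⁻¹ ∈ genPuiseuxValuationRing := by
  have hfc := coe_ne_zero hf
  have hinv0 : (f : HahnSeries ℝ ℂ)⁻¹ ≠ 0 := inv_ne_zero hfc
  refine ⟨isGP_inv f.2.1, ?_⟩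
  have hmul : (f : HahnSeries ℝ ℂ) * (f : HahnSeries ℝ ℂ)⁻¹ = 1 := mul_inv_cancel₀ hfc
  have horder : (f : HahnSeries ℝ ℂ).order + ((f : HahnSeries ℝ ℂ)⁻¹).order = 0 := by
    rw [← HahnSeries.order_mul hfc hinv0, hmul, HahnSeries.order_one]
  rw [← HahnSeries.order_eq_orderTop_of_ne_zero hinv0]
  have h2 : ((f : HahnSeries ℝ ℂ)⁻¹).order = 0 := by rw [ho, zero_add] at horder; exact horder
  rw [h2]
  exact le_refl _

lemma isUnit_of_orderTop_eq_zero {f : R} (hf : (f : HahnSeries ℝ ℂ).orderTop = 0) :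
    IsUnit f := by
  have hf0 : f ≠ 0 := by
    intro h
    rw [h, ZeroMemClass.coe_zero, HahnSeries.orderTop_zero] at hf
    exact WithTop.top_ne_zero hf
  have ho : (f : HahnSeries ℝ ℂ).order = 0 := by
    rw [← HahnSeries.order_eq_orderTop_of_ne_zero (coe_ne_zero hf0)] at hf
    exact_mod_cast hf
  refine IsUnit.of_mul_eq_one (a := f) ⟨(f : HahnSeries ℝ ℂ)⁻¹, inv_mem_R hf0 ho⟩ ?_
  exact Subtype.ext
    (by rw [MulMemClass.coe_mul, OneMemClass.coe_one]; exact mul_inv_cancel₀ (coe_ne_zero hf0))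

lemma mem_mId_of_mem_prime {P : Ideal R} (hP : P.IsPrime) {f : R} (hf : f ∈ P) : f ∈ mId := by
  rcases eq_or_lt_of_le (orderTop_coe_nonneg f) with h0 | hpos
  · exact absurd (Ideal.eq_top_of_isUnit_mem P hf (isUnit_of_orderTop_eq_zero h0.symm)) hP.ne_top
  · exact hpos

lemma prime_classify (P : Ideal R) (hP : P.IsPrime) : P = ⊥ ∨ P = mId := by
  by_cases hP0 : P = ⊥
  · exact Or.inl hP0
  refine Or.inr (le_antisymm (fun f hf => mem_mId_of_mem_prime hP hf) ?_)
  obtain ⟨g, hgP, hg0⟩ := (Submodule.ne_bot_iff P).mp hP0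
  have hgm : g ∈ mId := mem_mId_of_mem_prime hP hgP
  have hgc := coe_ne_zero hg0
  have hγ : (0:ℝ) < (g : HahnSeries ℝ ℂ).order := by
    rw [mem_mId_iff, ← HahnSeries.order_eq_orderTop_of_ne_zero hgc] at hgm
    exact_mod_cast hgm
  intro f hf
  by_cases hf0 : f = 0
  · rw [hf0]; exact P.zero_mem
  have hfc := coe_ne_zero hf0
  have hα : (0:ℝ) < (f : HahnSeries ℝ ℂ).order := by
    rw [mem_mId_iff, ← HahnSeries.order_eq_orderTop_of_ne_zero hfc] at hf
    exact_mod_cast hf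
  set α := (f : HahnSeries ℝ ℂ).order with hαdef
  set γ := (g : HahnSeries ℝ ℂ).order with hγdef
  obtain ⟨n, hn⟩ := exists_nat_ge (γ / α)
  have hnα : γ ≤ n * α := by
    rw [div_le_iff₀ hα] at hn
    exact hn
  set h : HahnSeries ℝ ℂ := (f : HahnSeries ℝ ℂ) ^ n * ((g : HahnSeries ℝ ℂ))⁻¹ with hhdef
  have hpow0 : ((f : HahnSeries ℝ ℂ)) ^ n ≠ 0 := pow_ne_zero _ hfc
  have hginv0 : ((g : HahnSeries ℝ ℂ))⁻¹ ≠ 0 := inv_ne_zero hgc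
  have hh0 : h ≠ 0 := mul_ne_zero hpow0 hginv0
  have hginv_ord : ((g : HahnSeries ℝ ℂ)⁻¹).order = -γ := by
    have hmul : (g : HahnSeries ℝ ℂ) * (g : HahnSeries ℝ ℂ)⁻¹ = 1 := mul_inv_cancel₀ hgc
    have h3 := HahnSeries.order_mul hgc hginv0
    rw [hmul, HahnSeries.order_one] at h3
    linarith [h3.symm]
  have hhord : h.order = n * α - γ := by
    rw [hhdef, HahnSeries.order_mul hpow0 hginv0, HahnSeries.order_pow, hginv_ord]
    push_cast [nsmul_eq_mul]
    ring
  have hhR : h ∈ genPuiseuxValuationRing := by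
    refine ⟨isGP_mul (isGP_pow f.2.1 n) (isGP_inv g.2.1), ?_⟩
    rw [← HahnSeries.order_eq_orderTop_of_ne_zero hh0, hhord]
    exact_mod_cast sub_nonneg.mpr hnα
  have key : (⟨h, hhR⟩ : R) * g = f ^ n := by
    refine Subtype.ext ?_
    rw [MulMemClass.coe_mul, SubmonoidClass.coe_pow]
    show h * (g : HahnSeries ℝ ℂ) = (f : HahnSeries ℝ ℂ) ^ n
    rw [hhdef, inv_mul_cancel_right₀ hgc]
  have hfn : f ^ n ∈ P := key ▸ Ideal.mul_mem_left P _ hgP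
  exact hP.mem_of_pow_mem n hfn

lemma mId_ne_bot : mId ≠ (⊥ : Ideal R) := by
  intro h
  have hx : (HahnSeries.single (1:ℝ) (1:ℂ)) ∈ genPuiseuxValuationRing := by
    refine ⟨isGP_single 1 1, ?_⟩
    rw [HahnSeries.orderTop_single one_ne_zero]
    exact_mod_cast zero_le_one
  set x : R := ⟨HahnSeries.single (1:ℝ) (1:ℂ), hx⟩ with hxdef
  have hxm : x ∈ mId := by
    rw [mem_mId_iff]
    show 0 < (HahnSeries.single (1:ℝ) (1:ℂ)).orderTop
    rw [HahnSeries.orderTop_single one_ne_zero]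
    exact_mod_cast zero_lt_one
  rw [h, Submodule.mem_bot] at hxm
  have : (HahnSeries.single (1:ℝ) (1:ℂ)) = 0 := by
    have := congrArg (Subtype.val) hxm
    simpa [hxdef] using this
  exact HahnSeries.single_ne_zero one_ne_zero this

end GPAux

/-- The valuation ring `R_val` of the field `𝕂` of generalised Puiseux series over `ℂ`
has Krull dimension one. -/
theorem genPuiseuxValuationRing_krullDim_eq_one :
    ringKrullDim genPuiseuxValuationRing = 1 := by
  classical
  have hbot : (⊥ : Ideal genPuiseuxValuationRing).IsPrime := Ideal.bot_prime
  set p0 : PrimeSpectrum genPuiseuxValuationRing := ⟨⊥, hbot⟩ with hp0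
  set p1 : PrimeSpectrum genPuiseuxValuationRing := ⟨GPAux.mId, GPAux.mId_isPrime⟩ with hp1
  have hAs : ∀ x y : PrimeSpectrum genPuiseuxValuationRing, x < y → x.asIdeal < y.asIdeal :=
    fun x y h => lt_of_le_of_ne (show x.asIdeal ≤ y.asIdeal from h.le)
      (fun e => h.ne (PrimeSpectrum.ext e))
  have hlt : p0 < p1 := by
    have h1 : p0.asIdeal ≤ p1.asIdeal := bot_le
    have h2 : p0 ≠ p1 := by
      intro e
      exact GPAux.mId_ne_bot (congrArg PrimeSpectrum.asIdeal e).symm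
    exact lt_of_le_of_ne (show p0 ≤ p1 from h1) h2
  have hclass : ∀ x : PrimeSpectrum genPuiseuxValuationRing,
      x.asIdeal = ⊥ ∨ x.asIdeal = GPAux.mId :=
    fun x => GPAux.prime_classify x.asIdeal x.2
  show Order.krullDim (PrimeSpectrum genPuiseuxValuationRing) = 1
  refine le_antisymm ?_ ?_
  · refine iSup_le fun p => ?_
    have hlen : p.length ≤ 1 := by
      by_contra hc
      push_neg at hc
      have h01 : (⟨0, by omega⟩ : Fin (p.length + 1)) < ⟨1, by omega⟩ := by
        rw [Fin.mk_lt_mk]; omega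
      have h12 : (⟨1, by omega⟩ : Fin (p.length + 1)) < ⟨2, by omega⟩ := by
        rw [Fin.mk_lt_mk]; omega
      have hab := hAs _ _ (p.strictMono h01)
      have hbc := hAs _ _ (p.strictMono h12)
      rcases hclass (p.toFun ⟨1, by omega⟩) with h | h
      · rw [h] at hab
        exact not_lt_bot hab
      · rw [h] at hbc
        rcases hclass (p.toFun ⟨2, by omega⟩) with h2 | h2
        · rw [h2] at hbc
          exact not_lt_bot hbc
        · rw [h2] at hbc
          exact lt_irrefl _ hbc
    exact_mod_cast hlen
  · let q : LTSeries (PrimeSpectrum genPuiseuxValuationRing) :=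
      { length := 1
        toFun := ![p0, p1]
        step := fun i => by
          fin_cases i
          simpa using hlt }
    have h := Order.LTSeries.length_le_krullDim q
    exact_mod_cast h
end

section
/- If real numbers α₁, …, αₙ are algebraically independent over ℚ, then the elements t^{α₁}, …, t^{αₙ} of the field 𝕂 of generalised Puiseux series over ℂ are algebraically independent over ℂ. -/
open MvPolynomial in
/-- If the real numbers `α₁, …, αₙ` are algebraically independent over `ℚ`, then the
single-term generalised Puiseux series `t ^ α₁, …, t ^ αₙ` (each of which lies in `𝕂`)
are algebraically independent over `ℂ`. -/
theorem genPuiseux_single_algebraicIndependent (n : ℕ) (α : Fin n → ℝ)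
    (hα : AlgebraicIndependent ℚ α) :
    (∀ i, IsGenPuiseux (HahnSeries.single (α i) (1 : ℂ))) ∧
    AlgebraicIndependent ℂ (fun i => (HahnSeries.single (α i) (1 : ℂ) : HahnSeries ℝ ℂ)) := by
  constructor
  · intro i M
    exact ((Set.finite_singleton (α i)).subset
      (HahnSeries.support_single_subset)).inter_of_left _
  · set v : Fin n → HahnSeries ℝ ℂ := fun i => HahnSeries.single (α i) (1 : ℂ) with hv
    set l : (Fin n →₀ ℕ) → ℝ := fun d => ∑ i, (d i : ℝ) * α i with hl
    have hinj : Function.Injective l := by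
      intro d e hde
      have hsub := sub_eq_zero_of_eq hde
      simp only [hl, ← Finset.sum_sub_distrib] at hsub
      have hli := Fintype.linearIndependent_iff.mp hα.linearIndependent
        (fun i => (d i : ℚ) - (e i : ℚ)) ?_
      · ext i
        have := hli i
        have : (d i : ℚ) = (e i : ℚ) := by linarith
        exact_mod_cast this
      · rw [← hsub]
        apply Finset.sum_congr rfl
        intro i _
        rw [Rat.smul_def]
        push_cast
        ring
    have hsingles : ∀ (d : Fin n →₀ ℕ) (s : Finset (Fin n)),
        (∏ i ∈ s, HahnSeries.single ((d i : ℝ) * α i) (1 : ℂ)) =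
          HahnSeries.single (∑ i ∈ s, (d i : ℝ) * α i) (1 : ℂ) := by
      intro d s
      induction s using Finset.induction with
      | empty =>
        rw [Finset.prod_empty, Finset.sum_empty, ← HahnSeries.C_apply, HahnSeries.C_one]
      | insert _ _ h ih =>
        rw [Finset.prod_insert h, ih, HahnSeries.single_mul_single, one_mul,
          Finset.sum_insert h]
    have key : ∀ p : MvPolynomial (Fin n) ℂ,
        aeval v p = ∑ d ∈ p.support, HahnSeries.single (l d) (coeff d p) := by
      intro p
      conv_lhs => rw [p.as_sum]
      rw [map_sum]
      apply Finset.sum_congr rfl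
      intro d _
      rw [aeval_monomial]
      have hpow : ∀ i, v i ^ d i = HahnSeries.single ((d i : ℝ) * α i) (1 : ℂ) := by
        intro i
        rw [hv, HahnSeries.single_pow, one_pow, nsmul_eq_mul]
      rw [Finsupp.prod_fintype _ _ (fun i => by simp [hv])]
      simp_rw [hpow, hsingles d Finset.univ]
      rw [HahnSeries.algebraMap_apply', PowerSeries.algebraMap_apply, Algebra.algebraMap_self_apply,
        HahnSeries.ofPowerSeries_C, HahnSeries.C_apply, HahnSeries.single_mul_single,
        zero_add, mul_one]
    rw [algebraicIndependent_iff]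
    intro p hp
    rw [key p] at hp
    ext d
    rw [coeff_zero]
    by_cases hd : d ∈ p.support
    · have h2 := congrArg (HahnSeries.coeff.addMonoidHom (l d)) hp
      rw [map_sum, map_zero] at h2
      rw [Finset.sum_eq_single_of_mem d hd (fun e _ hne => by
        simpa using HahnSeries.coeff_single_of_ne (fun h => hne (hinj h.symm)))] at h2
      simpa using h2
    · simpa using hd
end

section
/- The field extension ℂ ⊆ 𝕂, where 𝕂 is the field of generalised Puiseux series over ℂ, has infinite transcendence degree. -/
open HahnSeries Polynomial

noncomputable def tt : ℝ := liouvilleNumber 2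

lemma tt_trans : Transcendental ℤ tt := transcendental_liouvilleNumber le_rfl

noncomputable def sig (d : ℕ →₀ ℕ) : ℝ := d.sum fun n k => (k : ℝ) * tt ^ n

lemma coeff_psum (d : ℕ →₀ ℕ) (m : ℕ) :
    (d.sum fun n k => (C (k : ℤ)) * X ^ n).coeff m = (d m : ℤ) := by
  simp only [Finsupp.sum]
  rw [Polynomial.finset_sum_coeff]
  simp only [Polynomial.coeff_C_mul, Polynomial.coeff_X_pow, mul_ite, mul_one, mul_zero]
  rw [Finset.sum_ite_eq d.support m (fun n => (d n : ℤ))]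
  split_ifs with h
  · rfl
  · simp [Finsupp.notMem_support_iff.mp h]

lemma aeval_psum (d : ℕ →₀ ℕ) :
    Polynomial.aeval tt (d.sum fun n k => (C (k : ℤ)) * X ^ n) = sig d := by
  rw [map_finsuppSum, sig, Finsupp.sum, Finsupp.sum]
  congr 1
  ext n
  simp

lemma sig_inj : Function.Injective sig := by
  intro d e h
  have hp : Polynomial.aeval tt ((d.sum fun n k => (C (k : ℤ)) * X ^ n)
      - (e.sum fun n k => (C (k : ℤ)) * X ^ n)) = 0 := by
    rw [map_sub, aeval_psum, aeval_psum, h, sub_self]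
  have := transcendental_iff.mp tt_trans _ hp
  ext m
  have h2 := congrArg (fun q => Polynomial.coeff q m) this
  simp only [Polynomial.coeff_sub, coeff_psum, Polynomial.coeff_zero, sub_eq_zero] at h2
  exact_mod_cast h2

lemma prod_single (s : Finset ℕ) (f : ℕ → ℝ) :
    (∏ i ∈ s, (single (f i) (1 : ℂ))) = single (∑ i ∈ s, f i) 1 := by
  classical
  induction s using Finset.induction with
  | empty => simp [HahnSeries.single_zero_one]  -- single 0 1 = 1?
  | @insert a s h ih =>
    rw [Finset.prod_insert h, Finset.sum_insert h, ih, single_mul_single, one_mul]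


/-- The field extension `ℂ ⊆ 𝕂` has infinite transcendence degree: there is an infinite
family of generalised Puiseux series which is algebraically independent over `ℂ`. -/
theorem genPuiseux_infinite_transcendence_degree :
    ∃ x : ℕ → HahnSeries ℝ ℂ, (∀ n, IsGenPuiseux (x n)) ∧ AlgebraicIndependent ℂ x := by
  refine ⟨fun n => single (tt ^ n) (1 : ℂ), ?_, ?_⟩
  · intro n M
    exact Set.Finite.inter_of_left
      ((Set.finite_singleton _).subset HahnSeries.support_single_subset) _
  · rw [algebraicIndependent_iff]
    intro p hp
    have key : MvPolynomial.aeval (fun n => single (tt ^ n) (1:ℂ)) p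
        = ∑ d ∈ p.support, single (sig d) (MvPolynomial.coeff d p) := by
      rw [MvPolynomial.aeval_def, MvPolynomial.eval₂_eq]
      refine Finset.sum_congr rfl fun d _ => ?_
      have h1 : ∀ i : ℕ, (single (tt ^ i) (1:ℂ)) ^ d i = single ((d i : ℝ) * tt ^ i) 1 := by
        intro i; rw [single_pow, one_pow, nsmul_eq_mul]
      simp_rw [h1]
      rw [prod_single]
      have h2 : (algebraMap ℂ (HahnSeries ℝ ℂ)) (MvPolynomial.coeff d p)
          = single 0 (MvPolynomial.coeff d p) := by
        rw [HahnSeries.algebraMap_apply', PowerSeries.algebraMap_apply,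
          Algebra.algebraMap_self_apply, HahnSeries.ofPowerSeries_C, HahnSeries.C_apply]
      rw [h2, single_mul_single, zero_add, mul_one]
      rfl
    rw [key] at hp
    by_contra hne
    obtain ⟨d, hd⟩ := MvPolynomial.support_nonempty.mpr hne
    have h := congrArg (fun f : HahnSeries ℝ ℂ => f.coeff (sig d)) hp
    simp only [HahnSeries.coeff_zero] at h
    rw [show (∑ d' ∈ p.support, single (sig d') (MvPolynomial.coeff d' p)).coeff (sig d)
        = ∑ d' ∈ p.support, (single (sig d') (MvPolynomial.coeff d' p)).coeff (sig d) from
        map_sum (HahnSeries.coeff.addMonoidHom (sig d)) _ _] at h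
    rw [Finset.sum_eq_single d (fun d' _ hne' => by
        rw [HahnSeries.coeff_single_of_ne (fun hc => hne' (sig_inj hc.symm))])
      (fun hmem => absurd hd hmem)] at h
    rw [HahnSeries.coeff_single_same] at h
    exact MvPolynomial.mem_support_iff.mp hd h
end

section
/- Let f be an element of the field 𝕂 of generalised Puiseux series over ℂ with val(f) > 0, and let G = Σ_{n=0}^∞ aₙ·zⁿ ∈ ℂ[[z]] be a formal power series. Then the family (aₙ·fⁿ)_{n∈ℕ} is summable in the Hahn series field HahnSeries ℝ ℂ (for each exponent γ only finitely many terms have γ in their support, and the union of the supports is well-ordered), and its sum G(f) = Σ_{n=0}^∞ aₙ·fⁿ again lies in 𝕂. -/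
open Pointwise


lemma IsGenPuiseux.mul {x y : HahnSeries ℝ ℂ} (hx : IsGenPuiseux x) (hy : IsGenPuiseux y) :
    IsGenPuiseux (x * y) := by
  intro M
  rcases eq_or_ne x 0 with rfl | hx0
  · simp
  rcases eq_or_ne y 0 with rfl | hy0
  · simp
  have key : (x * y).support ∩ Set.Iic M ⊆
      (x.support ∩ Set.Iic (M - y.order)) + (y.support ∩ Set.Iic (M - x.order)) := by
    rintro γ ⟨hγ, hγM⟩
    obtain ⟨u, hu, v, hv, rfl⟩ := HahnSeries.support_mul_subset hγ
    have hux : x.order ≤ u := HahnSeries.order_le_of_coeff_ne_zero hu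
    have hvy : y.order ≤ v := HahnSeries.order_le_of_coeff_ne_zero hv
    exact ⟨u, ⟨hu, by simp at hγM ⊢; linarith⟩, v, ⟨hv, by simp at hγM ⊢; linarith⟩, rfl⟩
  exact (((hx _).add (hy _)).subset key)

lemma IsGenPuiseux.pow {x : HahnSeries ℝ ℂ} (hx : IsGenPuiseux x) (n : ℕ) :
    IsGenPuiseux (x ^ n) := by
  induction n with
  | zero =>
    intro M
    exact (Set.finite_singleton 0).subset (by simp [HahnSeries.support_one, Set.inter_subset_left])
  | succ n ih =>
    rw [pow_succ]
    exact ih.mul hx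

/-- If `f ∈ 𝕂` satisfies `val f > 0` (i.e. `f = 0` or the order of `f` is strictly
positive) and `G = Σ aₙ zⁿ ∈ ℂ[[z]]` is a formal power series, then the family
`(aₙ • fⁿ)ₙ` is summable in `HahnSeries ℝ ℂ` (for each exponent only finitely many terms
have a nonzero coefficient there, and the union of the supports is well-ordered, i.e. it
forms a `HahnSeries.SummableFamily`), and its sum `G(f)` again lies in `𝕂`. -/
theorem genPuiseux_powerSeries_substitution (f : HahnSeries ℝ ℂ) (hf : IsGenPuiseux f)
    (hpos : 0 < f.orderTop) (G : PowerSeries ℂ) :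
    ∃ s : HahnSeries.SummableFamily ℝ ℂ ℕ,
      (∀ n : ℕ, s n = (PowerSeries.coeff n G) • f ^ n) ∧ IsGenPuiseux s.hsum := by
  have hsupp : ∀ n : ℕ, ((PowerSeries.coeff n G) • f ^ n).support ⊆ (f ^ n).support := by
    intro n γ hγ
    simp only [HahnSeries.mem_support, HahnSeries.coeff_smul, smul_eq_mul] at hγ ⊢
    exact fun h => hγ (by rw [h, mul_zero])
  have h1 : (⋃ n : ℕ, ((PowerSeries.coeff n G) • f ^ n).support).IsPWO :=
    (HahnSeries.SummableFamily.isPWO_iUnion_support_powers (HahnSeries.zero_le_orderTop_iff.mp hpos.le)).mono (Set.iUnion_mono fun n => hsupp n)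
  have h2 : ∀ g : ℝ,
      {n : ℕ | ((PowerSeries.coeff n G) • f ^ n).coeff g ≠ 0}.Finite := by
    intro g
    refine ((HahnSeries.SummableFamily.powers f).finite_co_support g).subset ?_
    intro n hn
    simp only [Set.mem_setOf_eq, HahnSeries.coeff_smul, smul_eq_mul] at hn
    simp only [Function.mem_support, HahnSeries.SummableFamily.powers_toFun, hpos, if_true]
    exact fun h => hn (by rw [h, mul_zero])
  set s : HahnSeries.SummableFamily ℝ ℂ ℕ :=
    ⟨fun n => (PowerSeries.coeff n G) • f ^ n, h1, h2⟩ with hs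
  have hsn : ∀ n : ℕ, s n = (PowerSeries.coeff n G) • f ^ n := fun n => rfl
  refine ⟨s, hsn, ?_⟩
  intro M
  rcases eq_or_ne f 0 with rfl | hf0
  · refine ((hf.pow 0 M).union ((Set.finite_empty))).subset ?_
    intro γ ⟨hγ, hγM⟩
    obtain ⟨_, ⟨n, rfl⟩, hγn⟩ := HahnSeries.SummableFamily.support_hsum_subset hγ
    have hmem : γ ∈ ((PowerSeries.coeff n G) • (0:HahnSeries ℝ ℂ) ^ n).support := hγn
    rcases n with _ | n
    · exact Or.inl ⟨hsupp 0 hmem, hγM⟩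
    · simp [zero_pow] at hmem
  · have hc : 0 < f.order := (HahnSeries.zero_lt_orderTop_iff hf0).mp hpos
    obtain ⟨N, hN⟩ := exists_nat_gt (M / f.order)
    have hMN : M < N * f.order := (div_lt_iff₀ hc).mp hN
    have key : s.hsum.support ∩ Set.Iic M ⊆
        ⋃ n ∈ Finset.range N, ((f ^ n).support ∩ Set.Iic M) := by
      rintro γ ⟨hγ, hγM⟩
      obtain ⟨_, ⟨n, rfl⟩, hγn⟩ := HahnSeries.SummableFamily.support_hsum_subset hγ
      have hmem : γ ∈ (f ^ n).support := hsupp n hγn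
      have horder : (f ^ n).order ≤ γ := HahnSeries.order_le_of_coeff_ne_zero hmem
      rw [HahnSeries.order_pow, nsmul_eq_mul] at horder
      have hnN : n < N := by
        by_contra h
        push_neg at h
        have : (N : ℝ) * f.order ≤ n * f.order :=
          mul_le_mul_of_nonneg_right (by exact_mod_cast h) hc.le
        have hγM' : γ ≤ M := hγM
        linarith
      exact Set.mem_biUnion (Finset.mem_range.mpr hnN) ⟨hmem, hγM⟩
    exact (Set.Finite.biUnion (Finset.range N).finite_toSet fun n _ => (hf.pow n) M).subset key
end
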